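/- arXiv:1905.07988 — 4 statements merged into one kernel-verified Lean document; each statement's English description precedes it below -/
import Mathlib

section
/- Let Γ ⊆ ℝ² be a Borel set with finite one-dimensional Hausdorff measure, let v be a nonzero vector, let x ∈ ℝ², and let y ∈ ℝ² be a point not lying on the line x + ℝv. Then for almost every t ∈ ℝ (with respect to Lebesgue measure), the segment from x + tv to y intersects Γ in a set of H^1-measure zero. -/
open MeasureTheory Metric

theorem ae_segment_meets_in_null_set
    (Γ : Set (EuclideanSpace ℝ (Fin 2))) (hΓ : MeasurableSet Γ)
    (hΓfin : μH[1] Γ < ⊤)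
    (v : EuclideanSpace ℝ (Fin 2)) (hv : v ≠ 0)
    (x y : EuclideanSpace ℝ (Fin 2))
    (hy : ∀ t : ℝ, y ≠ x + t • v) :
    ∀ᵐ t : ℝ, μH[1] (segment ℝ (x + t • v) y ∩ Γ) = 0 := by
  haveI : NoAtoms (μH[1] : Measure (EuclideanSpace ℝ (Fin 2))) :=
    MeasureTheory.Measure.noAtoms_hausdorff _ one_pos
  set As : ℝ → Set (EuclideanSpace ℝ (Fin 2)) :=
    fun t => (segment ℝ (x + t • v) y ∩ Γ) \ {y} with hAs
  -- segments through y intersect only at y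
  have hdisj : Pairwise (Function.onFun Disjoint As) := by
    intro s t hst
    simp only [Function.onFun]
    rw [Set.disjoint_left]
    rintro p ⟨⟨hp1, _⟩, hpy⟩ ⟨⟨hp2, _⟩, _⟩
    obtain ⟨a, b, ha, hb, hab, hpab⟩ := hp1
    obtain ⟨c, d, hc, hd, hcd, hpcd⟩ := hp2
    by_cases hac : a = c
    · subst hac
      have hbd : b = d := by linarith
      subst hbd
      have : a • (x + s • v) = a • (x + t • v) := by
        have := hpab.trans hpcd.symm
        linear_combination (norm := module) this
      have h2 : (a * (s - t)) • v = 0 := by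
        have h' := sub_eq_zero_of_eq this
        rw [smul_add, smul_add, ← sub_sub, add_sub_cancel_left, smul_smul, smul_smul,
          ← sub_smul] at h'
        rw [mul_sub]
        exact h' 
      rcases smul_eq_zero.mp h2 with h3 | h3
      · have ha0 : a = 0 := by
          rcases mul_eq_zero.mp h3 with h | h
          · exact h
          · exact absurd (sub_eq_zero.mp h) hst
        have hb1 : b = 1 := by linarith
        apply hpy
        simp only [Set.mem_singleton_iff]
        rw [← hpab, ha0, hb1, zero_smul, one_smul, zero_add]
      · exact hv h3
    · exfalso
      have key : (a - c) • y = (a - c) • x + (a * s - c * t) • v := by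
        have h := hpab.trans hpcd.symm
        have hbd : b - d = -(a - c) := by linarith
        have : a • (x + s • v) - c • (x + t • v) = (a - c) • y := by
          have hd' : d • y - b • y = (a - c) • y := by
            rw [← sub_smul]
            congr 1
            linarith
          linear_combination (norm := module) h + hd'
        rw [← this]
        simp only [smul_add, smul_smul, sub_smul]
        module
      apply hy ((a * s - c * t) / (a - c))
      have hac' : a - c ≠ 0 := sub_ne_zero.mpr hac
      have := congrArg (fun z => (a - c)⁻¹ • z) key
      simp only [smul_add, smul_smul, inv_mul_cancel₀ hac', one_smul] at this
      rw [this, div_eq_inv_mul]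
  have hmble : ∀ t, MeasurableSet (As t) := by
    intro t
    refine MeasurableSet.diff (MeasurableSet.inter ?_ hΓ) (measurableSet_singleton y)
    rw [segment_eq_image]
    exact ((isCompact_Icc.image (by continuity)).isClosed).measurableSet
  have hcnt : Set.Countable { t : ℝ | 0 < μH[1] (As t) } := by
    apply MeasureTheory.Measure.countable_meas_pos_of_disjoint_of_meas_iUnion_ne_top
      _ hmble hdisj
    have hsub : (⋃ t, As t) ⊆ Γ := by
      intro p hp
      obtain ⟨t, ⟨⟨_, hpΓ⟩, _⟩⟩ := Set.mem_iUnion.mp hp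
      exact hpΓ
    exact ne_top_of_le_ne_top hΓfin.ne (measure_mono hsub)
  have hnull : (volume : Measure ℝ) { t : ℝ | 0 < μH[1] (As t) } = 0 :=
    Set.Countable.measure_zero hcnt _
  rw [MeasureTheory.ae_iff]
  refine measure_mono_null ?_ hnull
  intro t ht
  simp only [Set.mem_setOf_eq] at ht ⊢
  have hAst : μH[1] (As t) = μH[1] (segment ℝ (x + t • v) y ∩ Γ) := by
    apply measure_diff_null
    exact this.measure_singleton y
  rw [hAst]
  exact pos_iff_ne_zero.mpr ht
end

section
/- Let Ω ⊆ ℝ² be a domain (open connected set), F a connected component of the boundary ∂Ω, and B the connected component of the complement ℝ² \ Ω containing F. Then the boundary of B equals F. -/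
open Set Complex Topology Metric

variable {α : Type*} [TopologicalSpace α]


variable {α : Type*} [TopologicalSpace α]

/-- A continuous function whose exponential is constantly 1 is constant on a preconnected set. -/
lemma const_of_exp_eq_one {s : Set α} (hs : IsPreconnected s) {ψ : α → ℂ}
    (hψ : ContinuousOn ψ s) (h1 : ∀ x ∈ s, Complex.exp (ψ x) = 1) :
    ∀ x ∈ s, ∀ y ∈ s, ψ x = ψ y := by
  have him : ∀ x ∈ s, ∃ n : ℤ, (ψ x).im = 2 * Real.pi * n := by
    intro x hx
    obtain ⟨n, hn⟩ := Complex.exp_eq_one_iff.mp (h1 x hx)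
    refine ⟨n, ?_⟩
    rw [hn]
    simp [Complex.mul_im]
    ring
  have hpre : IsPreconnected ((fun x => (ψ x).im) '' s) :=
    hs.image _ (Complex.continuous_im.comp_continuousOn hψ)
  have hoc : OrdConnected ((fun x => (ψ x).im) '' s) := hpre.ordConnected
  intro x hx y hy
  obtain ⟨m, hm⟩ := him x hx
  obtain ⟨n, hn⟩ := him y hy
  have hre : (ψ x).re = (ψ y).re := by
    obtain ⟨mx, hmx⟩ := Complex.exp_eq_one_iff.mp (h1 x hx)
    obtain ⟨my, hmy⟩ := Complex.exp_eq_one_iff.mp (h1 y hy)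
    have : (ψ x).re = 0 := by rw [hmx]; simp
    have : (ψ y).re = 0 := by rw [hmy]; simp
    simp_all
  have him' : (ψ x).im = (ψ y).im := by
    by_contra hne
    have hmn : m ≠ n := by
      intro h; apply hne; rw [hm, hn, h]
    -- midpoint trick
    rcases lt_or_gt_of_ne hmn with h | h
    case _ =>
      have h1' : (ψ x).im ∈ (fun x => (ψ x).im) '' s := ⟨x, hx, rfl⟩
      have h2' : (ψ y).im ∈ (fun x => (ψ x).im) '' s := ⟨y, hy, rfl⟩
      have hmem : 2 * Real.pi * m + Real.pi ∈ Icc ((ψ x).im) ((ψ y).im) := by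
        constructor
        · rw [hm]; nlinarith [Real.pi_pos]
        · rw [hn]
          have : (m : ℝ) + 1 ≤ n := by exact_mod_cast h
          nlinarith [Real.pi_pos]
      obtain ⟨a, ha, hav⟩ := hoc.out h1' h2' hmem
      obtain ⟨k, hk⟩ := him a ha
      simp only [hk] at hav
      have : (2 : ℝ) * k = 2 * m + 1 := by
        have hpi := Real.pi_pos
        nlinarith
      have : (2 : ℤ) * k = 2 * m + 1 := by exact_mod_cast this
      omega
    case _ =>
      have h1' : (ψ x).im ∈ (fun x => (ψ x).im) '' s := ⟨x, hx, rfl⟩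
      have h2' : (ψ y).im ∈ (fun x => (ψ x).im) '' s := ⟨y, hy, rfl⟩
      have hmem : 2 * Real.pi * n + Real.pi ∈ Icc ((ψ y).im) ((ψ x).im) := by
        constructor
        · rw [hn]; nlinarith [Real.pi_pos]
        · rw [hm]
          have : (n : ℝ) + 1 ≤ m := by exact_mod_cast h
          nlinarith [Real.pi_pos]
      obtain ⟨a, ha, hav⟩ := hoc.out h2' h1' hmem
      obtain ⟨k, hk⟩ := him a ha
      simp only [hk] at hav
      have : (2 : ℝ) * k = 2 * n + 1 := by
        have hpi := Real.pi_pos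
        nlinarith
      have : (2 : ℤ) * k = 2 * n + 1 := by exact_mod_cast this
      omega
  exact Complex.ext hre him'



/-- Local logarithm: if the image lies in a ball around `c` avoiding 0. -/
lemma exists_log_of_ball {g : α → ℂ} {s : Set α} (hg : ContinuousOn g s)
    {c : ℂ} (hc : c ≠ 0) (him : ∀ x ∈ s, g x ∈ Metric.ball c ‖c‖) :
    ∃ h : α → ℂ, ContinuousOn h s ∧ ∀ x ∈ s, Complex.exp (h x) = g x := by
  have hslit : ∀ x ∈ s, g x / c ∈ slitPlane := by
    intro x hx
    have hd : ‖g x / c - 1‖ < 1 := by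
      have : g x / c - 1 = (g x - c) / c := by field_simp
      rw [this, norm_div]
      rw [div_lt_one (norm_pos_iff.mpr hc)]
      simpa [dist_eq_norm] using him x hx
    refine Complex.mem_slitPlane_iff.mpr (Or.inl ?_)
    have h1 : |(g x / c - 1).re| ≤ ‖g x / c - 1‖ := Complex.abs_re_le_norm _
    have h2 : (g x / c - 1).re = (g x / c).re - 1 := by simp
    nlinarith [abs_nonneg ((g x / c - 1).re), le_abs_self ((g x / c - 1).re),
      neg_abs_le ((g x / c - 1).re)]
  refine ⟨fun x => Complex.log (g x / c) + Complex.log c, ?_, ?_⟩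
  · exact ((hg.div_const c).clog hslit).add continuousOn_const
  · intro x hx
    have hgx : g x ≠ 0 := by
      intro h0
      have := him x hx
      simp [h0, dist_eq_norm] at this
    rw [Complex.exp_add, Complex.exp_log (div_ne_zero hgx hc), Complex.exp_log hc,
      div_mul_cancel₀ _ hc]

/-- Gluing two continuous functions agreeing on the intersection of closed sets. -/
lemma continuousOn_union_glue {s t : Set α} (hs : IsClosed s) (ht : IsClosed t)
    {f g : α → ℂ} [∀ x, Decidable (x ∈ s)] (hf : ContinuousOn f s) (hg : ContinuousOn g t)
    (he : EqOn f g (s ∩ t)) :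
    ContinuousOn (fun x => if x ∈ s then f x else g x) (s ∪ t) := by
  set F := fun x => if x ∈ s then f x else g x with hF
  have hFs : EqOn F f s := fun y hy => by simp [hF, hy]
  have hFt : EqOn F g t := by
    intro y hy
    by_cases hys : y ∈ s
    · simp [hF, hys, he ⟨hys, hy⟩]
    · simp [hF, hys]
  intro x hx
  have h1 : ContinuousWithinAt F s x := by
    by_cases hxs : x ∈ closure s
    · rw [hs.closure_eq] at hxs
      exact ((hf x hxs).congr hFs (hFs hxs))
    · exact continuousWithinAt_of_notMem_closure hxs
  have h2 : ContinuousWithinAt F t x := by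
    by_cases hxt : x ∈ closure t
    · rw [ht.closure_eq] at hxt
      refine (hg x hxt).congr hFt (hFt hxt)
    · exact continuousWithinAt_of_notMem_closure hxt
  exact (h1.union h2)

/-- If `g` admits continuous logs on closed sets `s`, `t` with nonempty preconnected
intersection, it admits one on the union. -/
lemma exists_log_union {g : α → ℂ} {s t : Set α} (hs : IsClosed s) (ht : IsClosed t)
    (hne : (s ∩ t).Nonempty) (hconn : IsPreconnected (s ∩ t))
    (Hs : ∃ h : α → ℂ, ContinuousOn h s ∧ ∀ x ∈ s, Complex.exp (h x) = g x)
    (Ht : ∃ h : α → ℂ, ContinuousOn h t ∧ ∀ x ∈ t, Complex.exp (h x) = g x) :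
    ∃ h : α → ℂ, ContinuousOn h (s ∪ t) ∧ ∀ x ∈ s ∪ t, Complex.exp (h x) = g x := by
  classical
  obtain ⟨h₁, h₁c, h₁e⟩ := Hs
  obtain ⟨h₂, h₂c, h₂e⟩ := Ht
  obtain ⟨a, ha⟩ := hne
  set d := h₁ a - h₂ a with hd
  have hψ : ∀ x ∈ s ∩ t, h₁ x - h₂ x = d := by
    have := const_of_exp_eq_one hconn
      ((h₁c.mono inter_subset_left).sub (h₂c.mono inter_subset_right))
      (fun x hx => by
        rw [Pi.sub_apply, Complex.exp_sub, h₁e x hx.1, h₂e x hx.2, div_self]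
        intro h0
        have := h₂e x hx.2
        rw [h0] at this
        exact Complex.exp_ne_zero _ this)
    exact fun x hx => this x hx a ha
  have heq : EqOn h₁ (fun x => h₂ x + d) (s ∩ t) := by
    intro x hx
    have := hψ x hx
    simp only
    linear_combination this
  refine ⟨fun x => if x ∈ s then h₁ x else h₂ x + d, ?_, ?_⟩
  · exact continuousOn_union_glue hs ht h₁c (h₂c.add continuousOn_const) heq
  · intro x hx
    by_cases hxs : x ∈ s
    · simp only [hxs, if_pos]
      exact h₁e x hxs
    · have hxt : x ∈ t := hx.resolve_left hxs
      simp only [hxs, if_neg, if_false]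
      rw [Complex.exp_add, h₂e x hxt, hd, Complex.exp_sub, h₁e a ha.1, h₂e a ha.2,
        div_self, mul_one]
      intro h0
      have := h₂e a ha.2
      rw [h0] at this
      exact Complex.exp_ne_zero _ this

/-- Chain gluing along finitely many closed sets. -/
lemma exists_log_chain {g : α → ℂ} {C : ℕ → Set α} (hcl : ∀ k, IsClosed (C k))
    (N : ℕ)
    (hlog : ∀ k, k ≤ N → ∃ h : α → ℂ, ContinuousOn h (C k) ∧ ∀ x ∈ C k, Complex.exp (h x) = g x)
    (hint : ∀ k, k < N → ((⋃ i ≤ k, C i) ∩ C (k + 1)).Nonempty ∧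
      IsPreconnected ((⋃ i ≤ k, C i) ∩ C (k + 1))) :
    ∃ h : α → ℂ, ContinuousOn h (⋃ i ≤ N, C i) ∧
      ∀ x ∈ ⋃ i ≤ N, C i, Complex.exp (h x) = g x := by
  induction N with
  | zero =>
    simpa [Nat.le_zero] using hlog 0 le_rfl
  | succ n ih =>
    have hU : (⋃ i ≤ n + 1, C i) = (⋃ i ≤ n, C i) ∪ C (n + 1) := by
      ext x
      simp only [mem_iUnion, mem_union, exists_prop]
      constructor
      · rintro ⟨i, hi, hx⟩
        rcases Nat.lt_succ_iff_lt_or_eq.mp (Nat.lt_succ_of_le hi) with h | h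
        · exact Or.inl ⟨i, by omega, hx⟩
        · exact Or.inr (h ▸ hx)
      · rintro (⟨i, hi, hx⟩ | hx)
        · exact ⟨i, by omega, hx⟩
        · exact ⟨n + 1, le_rfl, hx⟩
    rw [hU]
    have hUcl : IsClosed (⋃ i ≤ n, C i) := by
      have : (⋃ i ≤ n, C i) = ⋃ i ∈ Finset.range (n + 1), C i := by
        ext x; simp only [mem_iUnion, Finset.mem_range, exists_prop]; constructor
        · rintro ⟨i, hi, hx⟩; exact ⟨i, by omega, hx⟩
        · rintro ⟨i, hi, hx⟩; exact ⟨i, by omega, hx⟩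
      rw [this]
      exact isClosed_biUnion_finset fun i _ => hcl i
    exact exists_log_union hUcl (hcl (n + 1)) (hint n (Nat.lt_succ_self n)).1
      (hint n (Nat.lt_succ_self n)).2
      (ih (fun k hk => hlog k (by omega)) (fun k hk => hint k (by omega)))
      (hlog (n + 1) le_rfl)

section Plane

/-- Transfer a log along `Prod.swap`. -/
lemma exists_log_swap {g : ℝ × ℝ → ℂ} {s t : Set ℝ}
    (H : ∃ h : ℝ × ℝ → ℂ, ContinuousOn h (t ×ˢ s) ∧
      ∀ x ∈ t ×ˢ s, Complex.exp (h x) = g x.swap) :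
    ∃ h : ℝ × ℝ → ℂ, ContinuousOn h (s ×ˢ t) ∧ ∀ x ∈ s ×ˢ t, Complex.exp (h x) = g x := by
  obtain ⟨h, hc, he⟩ := H
  refine ⟨h ∘ Prod.swap, ?_, ?_⟩
  · refine hc.comp continuous_swap.continuousOn ?_
    intro x hx
    exact ⟨hx.2, hx.1⟩
  · intro x hx
    have := he x.swap ⟨hx.2, hx.1⟩
    simpa using this

/-- Stack horizontal strips vertically. -/
lemma exists_log_stack {g : ℝ × ℝ → ℂ} {s : Set ℝ} (hs : IsClosed s) (hs' : Convex ℝ s)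
    (hsne : s.Nonempty) (t : ℕ → ℝ) (hmono : ∀ k, t k ≤ t (k + 1)) (N : ℕ)
    (hlog : ∀ k ≤ N, ∃ h : ℝ × ℝ → ℂ, ContinuousOn h (s ×ˢ Icc (t k) (t (k + 1))) ∧
      ∀ x ∈ s ×ˢ Icc (t k) (t (k + 1)), Complex.exp (h x) = g x) :
    ∃ h : ℝ × ℝ → ℂ, ContinuousOn h (s ×ˢ Icc (t 0) (t (N + 1))) ∧
      ∀ x ∈ s ×ˢ Icc (t 0) (t (N + 1)), Complex.exp (h x) = g x := by
  have hmono' : Monotone t := monotone_nat_of_le_succ hmono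
  have hU : ∀ k : ℕ, (⋃ i ≤ k, s ×ˢ Icc (t i) (t (i + 1))) = s ×ˢ Icc (t 0) (t (k + 1)) := by
    intro k
    induction k with
    | zero => simp [Nat.le_zero]
    | succ n ih =>
      have hU2 : (⋃ i ≤ n + 1, s ×ˢ Icc (t i) (t (i + 1)))
          = (⋃ i ≤ n, s ×ˢ Icc (t i) (t (i + 1))) ∪ s ×ˢ Icc (t (n + 1)) (t (n + 2)) := by
        ext x
        simp only [mem_iUnion, mem_union, exists_prop]
        constructor
        · rintro ⟨i, hi, hx⟩
          rcases Nat.lt_succ_iff_lt_or_eq.mp (Nat.lt_succ_of_le hi) with h | h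
          · exact Or.inl ⟨i, by omega, hx⟩
          · subst h; exact Or.inr hx
        · rintro (⟨i, hi, hx⟩ | hx)
          · exact ⟨i, by omega, hx⟩
          · exact ⟨n + 1, le_rfl, hx⟩
      rw [hU2, ih, ← prod_union,
        Icc_union_Icc_eq_Icc (hmono' (Nat.zero_le _)) (hmono (n + 1))]
  have key := exists_log_chain (g := g) (C := fun k => s ×ˢ Icc (t k) (t (k + 1)))
    (fun k => hs.prod isClosed_Icc) N hlog ?_
  · rw [hU N] at key
    exact key
  · intro k hk
    rw [hU k, prod_inter_prod, Icc_inter_Icc, inter_self,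
      max_eq_right (hmono' (Nat.zero_le _)), min_eq_left (hmono (k + 1))]
    constructor
    · obtain ⟨a, ha⟩ := hsne
      exact ⟨(a, t (k + 1)), ⟨ha, le_rfl, le_rfl⟩⟩
    · exact ((hs'.prod (convex_Icc _ _)).isPreconnected)

end Plane
section Plane2

lemma exists_log_square {g : ℝ × ℝ → ℂ} (hg : Continuous g) (h0 : ∀ x, g x ≠ 0)
    {R : ℝ} (hR : 0 < R) :
    ∃ h : ℝ × ℝ → ℂ, ContinuousOn h (Icc (-R) R ×ˢ Icc (-R) R) ∧
      ∀ x ∈ Icc (-R) R ×ˢ Icc (-R) R, Complex.exp (h x) = g x := by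
  set K : Set (ℝ × ℝ) := Icc (-R) R ×ˢ Icc (-R) R with hKdef
  have hK : IsCompact K := isCompact_Icc.prod isCompact_Icc
  have h0K : (0:ℝ) ∈ Icc (-R) R := ⟨by linarith, le_of_lt hR⟩
  have hKne : K.Nonempty := ⟨(0, 0), h0K, h0K⟩
  obtain ⟨w, hwK, hwmin⟩ := hK.exists_isMinOn hKne ((hg.norm).continuousOn)
  set m : ℝ := ‖g w‖ with hmdef
  have hm : 0 < m := norm_pos_iff.mpr (h0 w)
  have hmle : ∀ y ∈ K, m ≤ ‖g y‖ := fun y hy => hwmin hy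
  have huc : UniformContinuousOn g K := hK.uniformContinuousOn_of_continuous hg.continuousOn
  obtain ⟨δ, hδ, hδ'⟩ := Metric.uniformContinuousOn_iff.mp huc m hm
  obtain ⟨N, hNgt⟩ := exists_nat_gt (2 * R / δ)
  have hN0 : 0 < (N : ℝ) := lt_of_le_of_lt (by positivity) hNgt
  have hN0' : 0 < N := by exact_mod_cast hN0
  set σ : ℝ := 2 * R / N with hσdef
  have hσ : 0 < σ := by positivity
  have h2R : 2 * R < N * δ := (div_lt_iff₀ hδ).mp hNgt
  have hσδ : σ < δ := by
    rw [hσdef, div_lt_iff₀ hN0]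
    linarith
  set xg : ℕ → ℝ := fun i => -R + i * σ with hxgdef
  have hx0 : xg 0 = -R := by simp [hxgdef]
  have hxN : xg N = R := by
    simp only [hxgdef, hσdef]
    field_simp
    ring
  have hmono : ∀ k, xg k ≤ xg (k + 1) := by
    intro k
    simp only [hxgdef]
    push_cast
    nlinarith
  have hmono' : Monotone xg := monotone_nat_of_le_succ hmono
  have hbound : ∀ i, i ≤ N → -R ≤ xg i ∧ xg i ≤ R := by
    intro i hi
    constructor
    · rw [← hx0]; exact hmono' (Nat.zero_le i)
    · rw [← hxN]; exact hmono' hi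
  have hstep : ∀ i, xg (i + 1) = xg i + σ := by
    intro i; simp only [hxgdef]; push_cast; ring
  -- log on each small square
  have hsq : ∀ i j, i < N → j < N →
      ∃ h : ℝ × ℝ → ℂ, ContinuousOn h (Icc (xg i) (xg (i + 1)) ×ˢ Icc (xg j) (xg (j + 1))) ∧
        ∀ x ∈ Icc (xg i) (xg (i + 1)) ×ˢ Icc (xg j) (xg (j + 1)), Complex.exp (h x) = g x := by
    intro i j hi hj
    have hcornerK : (xg i, xg j) ∈ K := by
      exact ⟨⟨(hbound i (le_of_lt hi)).1, (hbound i (le_of_lt hi)).2⟩,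
        ⟨(hbound j (le_of_lt hj)).1, (hbound j (le_of_lt hj)).2⟩⟩
    have hsubK : Icc (xg i) (xg (i + 1)) ×ˢ Icc (xg j) (xg (j + 1)) ⊆ K := by
      rintro ⟨p1, p2⟩ ⟨⟨ha1, ha2⟩, ⟨hb1, hb2⟩⟩
      exact ⟨⟨le_trans (hbound i (le_of_lt hi)).1 ha1,
              le_trans ha2 (hbound (i + 1) hi).2⟩,
             ⟨le_trans (hbound j (le_of_lt hj)).1 hb1,
              le_trans hb2 (hbound (j + 1) hj).2⟩⟩
    apply exists_log_of_ball (hg.continuousOn) (h0 (xg i, xg j))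
    rintro ⟨p1, p2⟩ hp
    have hpK := hsubK hp
    have hd : dist (p1, p2) (xg i, xg j) < δ := by
      rw [Prod.dist_eq]
      have h1 : dist p1 (xg i) ≤ σ := by
        rw [Real.dist_eq, abs_le]
        obtain ⟨⟨ha1, ha2⟩, _⟩ := hp
        rw [hstep i] at ha2
        constructor <;> linarith
      have h2 : dist p2 (xg j) ≤ σ := by
        rw [Real.dist_eq, abs_le]
        obtain ⟨_, ⟨hb1, hb2⟩⟩ := hp
        rw [hstep j] at hb2
        constructor <;> linarith
      exact lt_of_le_of_lt (max_le h1 h2) hσδ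
    have := hδ' (p1, p2) hpK (xg i, xg j) hcornerK hd
    rw [Metric.mem_ball]
    exact lt_of_lt_of_le this (hmle _ hcornerK)
  -- rows
  obtain ⟨M, rfl⟩ : ∃ M, N = M + 1 := ⟨N - 1, (Nat.succ_pred_eq_of_pos hN0').symm⟩
  have hrow : ∀ j, j ≤ M →
      ∃ h : ℝ × ℝ → ℂ, ContinuousOn h (Icc (-R) R ×ˢ Icc (xg j) (xg (j + 1))) ∧
        ∀ x ∈ Icc (-R) R ×ˢ Icc (xg j) (xg (j + 1)), Complex.exp (h x) = g x := by
    intro j hj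
    apply exists_log_swap
    rw [← hx0, ← hxN]
    apply exists_log_stack isClosed_Icc (convex_Icc _ _)
      (Set.nonempty_Icc.mpr (hmono j)) xg hmono M
    intro k hk
    apply exists_log_swap (s := Icc (xg j) (xg (j + 1))) (t := Icc (xg k) (xg (k + 1)))
    obtain ⟨h, hc, he⟩ := hsq k j (by omega) (by omega)
    exact ⟨h, hc, fun x hx => by simpa using he x hx⟩
  -- stack rows
  have := exists_log_stack (g := g) isClosed_Icc (convex_Icc (-R) R)
    (Set.nonempty_Icc.mpr (by linarith)) xg hmono M hrow
  rw [hx0, hxN] at this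
  exact this

end Plane2
section Plane3

lemma exists_log_plane {g : ℝ × ℝ → ℂ} (hg : Continuous g) (h0 : ∀ x, g x ≠ 0) :
    ∃ h : ℝ × ℝ → ℂ, Continuous h ∧ ∀ x, Complex.exp (h x) = g x := by
  set Q : ℕ → Set (ℝ × ℝ) :=
    fun n => Icc (-(n + 1 : ℝ)) (n + 1) ×ˢ Icc (-(n + 1 : ℝ)) (n + 1) with hQdef
  have hQlog : ∀ n, ∃ h : ℝ × ℝ → ℂ, ContinuousOn h (Q n) ∧
      ∀ x ∈ Q n, Complex.exp (h x) = g x :=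
    fun n => exists_log_square hg h0 (by positivity)
  choose h hc he using hQlog
  set s : ℕ → ℂ := fun n =>
    Nat.rec 0 (fun n sn => sn - (h (n + 1) (0, 0) - h n (0, 0))) n with hsdef
  set H : ℕ → ℝ × ℝ → ℂ := fun n x => h n x + s n with hHdef
  have hQmono : ∀ {n m : ℕ}, n ≤ m → Q n ⊆ Q m := by
    intro n m hnm
    have : ((n : ℝ) + 1) ≤ (m : ℝ) + 1 := by
      have : (n : ℝ) ≤ m := by exact_mod_cast hnm
      linarith
    exact prod_mono (Icc_subset_Icc (by linarith) this) (Icc_subset_Icc (by linarith) this)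
  have h00 : ∀ n, ((0 : ℝ), (0 : ℝ)) ∈ Q n := by
    intro n
    have h1 : (0:ℝ) ∈ Icc (-(n + 1 : ℝ)) (n + 1) := by
      have hp : (0:ℝ) ≤ (n:ℝ) + 1 := by positivity
      exact ⟨by linarith, hp⟩
    exact ⟨h1, h1⟩
  have hconnQ : ∀ n, IsPreconnected (Q n) :=
    fun n => ((convex_Icc _ _).prod (convex_Icc _ _)).isPreconnected
  have hHexp : ∀ n, Complex.exp (s n) = 1 → ∀ x ∈ Q n, Complex.exp (H n x) = g x := by
    intro n hs1 x hx
    simp only [hHdef]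
    rw [Complex.exp_add, he n x hx, hs1, mul_one]
  have hs1 : ∀ n, Complex.exp (s n) = 1 := by
    intro n
    induction n with
    | zero => simp [hsdef]
    | succ n ih =>
      have hsucc : s (n + 1) = s n - (h (n + 1) (0, 0) - h n (0, 0)) := rfl
      rw [hsucc, Complex.exp_sub, ih, Complex.exp_sub,
        he (n + 1) _ (h00 (n + 1)), he n _ (h00 n), div_self (h0 _), div_one]
  have hHe : ∀ n, ∀ x ∈ Q n, Complex.exp (H n x) = g x := fun n => hHexp n (hs1 n)
  have hHc : ∀ n, ContinuousOn (H n) (Q n) := fun n => (hc n).add continuousOn_const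
  have hstep : ∀ n, EqOn (H (n + 1)) (H n) (Q n) := by
    intro n
    have hd := const_of_exp_eq_one (hconnQ n)
      (((hc (n + 1)).mono (hQmono (Nat.le_succ n))).sub (hc n))
      (fun y hy => by
        rw [Pi.sub_apply, Complex.exp_sub, he (n + 1) y (hQmono (Nat.le_succ n) hy), he n y hy,
          div_self (h0 y)])
    intro x hx
    have hdx := hd x hx (0, 0) (h00 n)
    have hsucc : s (n + 1) = s n - (h (n + 1) (0, 0) - h n (0, 0)) := rfl
    simp only [hHdef, hsucc]
    simp only [Pi.sub_apply] at hdx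
    linear_combination hdx
  have hEq : ∀ n m, n ≤ m → EqOn (H m) (H n) (Q n) := by
    intro n m hnm
    induction m, hnm using Nat.le_induction with
    | base => exact fun y _ => rfl
    | succ m hm ih =>
      intro y hy
      rw [hstep m (hQmono hm hy)]
      exact ih hy
  have hmemQ : ∀ (x : ℝ × ℝ) (n : ℕ), ‖x‖ ≤ n + 1 → x ∈ Q n := by
    intro x n hn
    have h1 : ‖x.1‖ ≤ (n : ℝ) + 1 := le_trans (le_max_left _ _) (by rw [← Prod.norm_def]; exact hn)
    have h2 : ‖x.2‖ ≤ (n : ℝ) + 1 := le_trans (le_max_right _ _) (by rw [← Prod.norm_def]; exact hn)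
    rw [Real.norm_eq_abs, abs_le] at h1 h2
    exact ⟨⟨h1.1, h1.2⟩, ⟨h2.1, h2.2⟩⟩
  have hxQ : ∀ x : ℝ × ℝ, x ∈ Q ⌊‖x‖⌋₊ := by
    intro x
    exact hmemQ x _ (le_of_lt (by exact_mod_cast Nat.lt_floor_add_one ‖x‖))
  refine ⟨fun x => H ⌊‖x‖⌋₊ x, ?_, fun x => hHe _ x (hxQ x)⟩
  rw [continuous_iff_continuousAt]
  intro x
  set n : ℕ := ⌊‖x‖⌋₊ + 1 with hn
  set U : Set (ℝ × ℝ) := Metric.ball 0 (n + 1) with hU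
  have hUopen : IsOpen U := Metric.isOpen_ball
  have hxU : x ∈ U := by
    rw [hU, Metric.mem_ball, dist_zero_right]
    have := Nat.lt_floor_add_one ‖x‖
    rw [hn]
    push_cast
    push_cast at this
    linarith
  have hUQ : U ⊆ Q n := by
    intro y hy
    rw [hU, Metric.mem_ball, dist_zero_right] at hy
    exact hmemQ y n (le_of_lt hy)
  have hagree : ∀ y ∈ U, H n y = H ⌊‖y‖⌋₊ y := by
    intro y hy
    have hkn : ⌊‖y‖⌋₊ ≤ n := by
      rw [hU, Metric.mem_ball, dist_zero_right] at hy
      have : ⌊‖y‖⌋₊ < n + 1 := by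
        rw [Nat.floor_lt (norm_nonneg y)]
        push_cast at hy ⊢
        linarith
      omega
    exact hEq _ n hkn (hxQ y)
  have hcont : ContinuousAt (H n) x :=
    (hHc n).continuousAt (Filter.mem_of_superset (hUopen.mem_nhds hxU) hUQ)
  apply hcont.congr
  apply Filter.eventuallyEq_of_mem (hUopen.mem_nhds hxU)
  intro y hy
  simpa using hagree y hy

end Plane3
section Euclid

lemma exists_log_euclidean {g : EuclideanSpace ℝ (Fin 2) → ℂ} (hg : Continuous g)
    (h0 : ∀ x, g x ≠ 0) :
    ∃ h : EuclideanSpace ℝ (Fin 2) → ℂ, Continuous h ∧ ∀ x, Complex.exp (h x) = g x := by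
  let e1 : EuclideanSpace ℝ (Fin 2) ≃ₜ (Fin 2 → ℝ) :=
    (EuclideanSpace.equiv (Fin 2) ℝ).toHomeomorph
  let e2 : (Fin 2 → ℝ) ≃ₜ ℝ × ℝ := Homeomorph.piFinTwo fun _ => ℝ
  let e := e1.trans e2
  obtain ⟨h, hc, he⟩ := exists_log_plane (g := g ∘ e.symm)
    (hg.comp e.symm.continuous) (fun x => h0 _)
  refine ⟨h ∘ e, hc.comp e.continuous, fun x => ?_⟩
  have := he (e x)
  simpa using this

/-- Unicoherence of the plane: the intersection of two closed preconnected sets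
covering the plane is preconnected. -/
lemma unicoherence_plane {A B : Set (EuclideanSpace ℝ (Fin 2))}
    (hA : IsClosed A) (hB : IsClosed B) (hAc : IsPreconnected A) (hBc : IsPreconnected B)
    (hcov : A ∪ B = univ) : IsPreconnected (A ∩ B) := by
  classical
  by_contra hnc
  rw [IsPreconnected] at hnc
  push_neg at hnc
  obtain ⟨u, v, hu, hv, hsub, hne1, hne2, hempty⟩ := hnc
  set P : Set (EuclideanSpace ℝ (Fin 2)) := (A ∩ B) \ v with hPdef
  set Q : Set (EuclideanSpace ℝ (Fin 2)) := (A ∩ B) \ u with hQdef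
  have hPcl : IsClosed P := (hA.inter hB).sdiff hv
  have hQcl : IsClosed Q := (hA.inter hB).sdiff hu
  have hPQ : P ∪ Q = A ∩ B := by
    apply Subset.antisymm
    · rintro x (⟨hx, _⟩ | ⟨hx, _⟩) <;> exact hx
    · intro x hx
      rcases hsub hx with hxu | hxv
      · left
        refine ⟨hx, fun hxv => ?_⟩
        have : x ∈ A ∩ B ∩ (u ∩ v) := ⟨hx, hxu, hxv⟩
        rw [hempty] at this
        exact this
      · right
        refine ⟨hx, fun hxu => ?_⟩
        have : x ∈ A ∩ B ∩ (u ∩ v) := ⟨hx, hxu, hxv⟩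
        rw [hempty] at this
        exact this
  have hdisj : Disjoint P Q := by
    rw [Set.disjoint_iff]
    rintro x ⟨⟨hx1, hxv⟩, ⟨_, hxu⟩⟩
    rcases hsub hx1 with h | h
    · exact hxu h
    · exact hxv h
  have hPne : P.Nonempty := by
    obtain ⟨x, hx, hxu⟩ := hne1
    refine ⟨x, hx, fun hxv => ?_⟩
    have : x ∈ A ∩ B ∩ (u ∩ v) := ⟨hx, hxu, hxv⟩
    rw [hempty] at this
    exact this
  have hQne : Q.Nonempty := by
    obtain ⟨x, hx, hxv⟩ := hne2
    refine ⟨x, hx, fun hxu => ?_⟩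
    have : x ∈ A ∩ B ∩ (u ∩ v) := ⟨hx, hxu, hxv⟩
    rw [hempty] at this
    exact this
  obtain ⟨f, hf0, hf1, hf01⟩ := exists_continuous_zero_one_of_isClosed hPcl hQcl hdisj
  -- the exponential test function
  set g : EuclideanSpace ℝ (Fin 2) → ℂ := fun x =>
    if x ∈ B then Complex.exp (-(Real.pi * f x * Complex.I))
    else Complex.exp (Real.pi * f x * Complex.I) with hgdef
  have hfrB : frontier B ⊆ A ∩ B := by
    intro x hx
    constructor
    · have h1 : x ∈ closure Bᶜ := by rw [closure_compl]; exact hx.2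
      have h2 : Bᶜ ⊆ A := by
        intro y hy
        rcases (Set.eq_univ_iff_forall.mp hcov y : y ∈ A ∪ B) with h | h
        · exact h
        · exact absurd h hy
      exact hA.closure_subset_iff.mpr h2 h1
    · exact hB.closure_subset hx.1
  have hval : ∀ x ∈ A ∩ B,
      Complex.exp (-(Real.pi * f x * Complex.I)) = Complex.exp (Real.pi * f x * Complex.I) := by
    intro x hx
    rw [← hPQ] at hx
    rcases hx with hx | hx
    · rw [hf0 hx]
      norm_num
    · rw [hf1 hx]
      norm_num
  have hfc : Continuous fun x : EuclideanSpace ℝ (Fin 2) =>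
      (Real.pi : ℂ) * (f x : ℂ) * Complex.I :=
    (continuous_const.mul (Complex.continuous_ofReal.comp f.continuous)).mul continuous_const
  have hgc : Continuous g := by
    rw [hgdef]
    apply continuous_if
    · intro a ha
      exact hval a (hfrB ha)
    · exact (Complex.continuous_exp.comp hfc.neg).continuousOn
    · exact (Complex.continuous_exp.comp hfc).continuousOn
  have hg0 : ∀ x, g x ≠ 0 := by
    intro x
    simp only [hgdef]
    split_ifs <;> exact Complex.exp_ne_zero _
  obtain ⟨h, hhc, hhe⟩ := exists_log_euclidean hgc hg0
  obtain ⟨p, hp⟩ := hPne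
  obtain ⟨q, hq⟩ := hQne
  have hpAB : p ∈ A ∩ B := hPQ ▸ Or.inl hp
  have hqAB : q ∈ A ∩ B := hPQ ▸ Or.inr hq
  have hfp : f p = 0 := hf0 hp
  have hfq : f q = 1 := hf1 hq
  -- on B
  have hB1 : h p + Real.pi * f p * Complex.I = h q + Real.pi * f q * Complex.I := by
    apply const_of_exp_eq_one hBc
      ((hhc.continuousOn).add hfc.continuousOn)
      _ p hpAB.2 q hqAB.2
    intro x hx
    simp only [Pi.add_apply]
    rw [Complex.exp_add, hhe x]
    have : g x = Complex.exp (-(Real.pi * f x * Complex.I)) := by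
      rw [hgdef]
      simp [hx]
    rw [this, ← Complex.exp_add]
    ring_nf
    exact Complex.exp_zero
  -- on A
  have hA1 : h p - Real.pi * f p * Complex.I = h q - Real.pi * f q * Complex.I := by
    apply const_of_exp_eq_one hAc
      ((hhc.continuousOn).sub hfc.continuousOn)
      _ p hpAB.1 q hqAB.1
    intro x hx
    simp only [Pi.sub_apply]
    rw [Complex.exp_sub, hhe x]
    by_cases hxB : x ∈ B
    · have hgx : g x = Complex.exp (-(Real.pi * f x * Complex.I)) := by
        rw [hgdef]; simp [hxB]
      rw [hgx, hval x ⟨hx, hxB⟩, ← Complex.exp_sub]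
      ring_nf
      exact Complex.exp_zero
    · have hgx : g x = Complex.exp (Real.pi * f x * Complex.I) := by
        rw [hgdef]; simp [hxB]
      rw [hgx, ← Complex.exp_sub]
      ring_nf
      exact Complex.exp_zero
  -- contradiction
  rw [hfp, hfq] at hB1 hA1
  push_cast at hB1 hA1
  have : (2 : ℂ) * Real.pi * Complex.I = 0 := by linear_combination hA1 - hB1
  simp [Complex.ext_iff, Real.pi_ne_zero] at this

end Euclid

theorem frontier_component_of_complement
    (Ω : Set (EuclideanSpace ℝ (Fin 2)))
    (hΩopen : IsOpen Ω) (hΩconn : IsConnected Ω)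
    (z : EuclideanSpace ℝ (Fin 2)) (hz : z ∈ frontier Ω)
    (F B : Set (EuclideanSpace ℝ (Fin 2)))
    (hF : F = connectedComponentIn (frontier Ω) z)
    (hB : B = connectedComponentIn Ωᶜ z) :
    frontier B = F := by
  subst hF hB
  have hfrΩ : frontier Ω ⊆ Ωᶜ := by
    intro x hx hxΩ
    rw [hΩopen.frontier_eq] at hx
    exact hx.2 hxΩ
  have hzc : z ∈ Ωᶜ := hfrΩ hz
  set B := connectedComponentIn Ωᶜ z with hBdef
  have hzB : z ∈ B := mem_connectedComponentIn hzc
  have hBsub : B ⊆ Ωᶜ := connectedComponentIn_subset _ _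
  have hBconn : IsPreconnected B := isPreconnected_connectedComponentIn
  have hΩc_closed : IsClosed (Ωᶜ) := hΩopen.isClosed_compl
  have hclosed_comp : ∀ x, x ∈ Ωᶜ → IsClosed (connectedComponentIn Ωᶜ x) := by
    intro x hx
    refine isClosed_of_closure_subset ?_
    exact IsPreconnected.subset_connectedComponentIn
      isPreconnected_connectedComponentIn.closure
      (subset_closure (mem_connectedComponentIn hx))
      (hΩc_closed.closure_subset_iff.mpr (connectedComponentIn_subset _ _))
  have hBclosed : IsClosed B := hclosed_comp z hzc
  have hint : ∀ x, x ∈ Ωᶜ → ∀ y, y ∈ connectedComponentIn Ωᶜ x → y ∉ closure Ω →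
      y ∈ interior (connectedComponentIn Ωᶜ x) := by
    intro x hx y hyK hyc
    have hyint : y ∈ interior Ωᶜ := by
      rw [interior_compl]
      exact hyc
    have hVopen : IsOpen (connectedComponentIn (interior Ωᶜ) y) :=
      isOpen_interior.connectedComponentIn
    have hVsub : connectedComponentIn (interior Ωᶜ) y ⊆ connectedComponentIn Ωᶜ x := by
      rw [connectedComponentIn_eq hyK]
      exact IsPreconnected.subset_connectedComponentIn
        isPreconnected_connectedComponentIn (mem_connectedComponentIn hyint)
        ((connectedComponentIn_subset _ _).trans interior_subset)
    exact interior_maximal hVsub hVopen (mem_connectedComponentIn hyint)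
  -- (a) frontier of any component is inside the frontier of Ω
  have hfrB : frontier B ⊆ frontier Ω := by
    intro x hx
    rw [hBclosed.frontier_eq] at hx
    obtain ⟨hxB, hxnotint⟩ := hx
    have hxcl : x ∈ closure Ω := by
      by_contra hxc
      exact hxnotint (hint z hzc x hxB hxc)
    rw [hΩopen.frontier_eq]
    exact ⟨hxcl, hBsub hxB⟩
  -- (b) every component of the complement touches the closure of Ω
  have htouch : ∀ x, x ∈ Ωᶜ → ∃ y ∈ connectedComponentIn Ωᶜ x, y ∈ closure Ω := by
    intro x hx
    by_contra hno
    push_neg at hno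
    have hKopen : IsOpen (connectedComponentIn Ωᶜ x) := by
      have : connectedComponentIn Ωᶜ x = interior (connectedComponentIn Ωᶜ x) :=
        Subset.antisymm (fun y hy => hint x hx y hy (hno y hy)) interior_subset
      rw [this]
      exact isOpen_interior
    have hclopen : IsClopen (connectedComponentIn Ωᶜ x) := ⟨hclosed_comp x hx, hKopen⟩
    rcases isClopen_iff.mp hclopen with hemp | huniv
    · rw [← connectedComponentIn_nonempty_iff (x := x) (F := Ωᶜ)] at hx
      · rw [hemp] at hx
        exact Set.not_nonempty_empty hx
    · obtain ⟨w, hw⟩ := hΩconn.nonempty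
      have : w ∈ Ωᶜ := connectedComponentIn_subset _ _ (huniv ▸ mem_univ w)
      exact this hw
  -- easy inclusion : F ⊆ frontier B
  have hFsub : connectedComponentIn (frontier Ω) z ⊆ B :=
    IsPreconnected.subset_connectedComponentIn isPreconnected_connectedComponentIn
      (mem_connectedComponentIn hz) ((connectedComponentIn_subset _ _).trans hfrΩ)
  have hFfr : connectedComponentIn (frontier Ω) z ⊆ frontier B := by
    intro x hxF
    rw [hBclosed.frontier_eq]
    refine ⟨hFsub hxF, fun hxint => ?_⟩
    have hxcl : x ∈ closure Ω :=
      frontier_subset_closure (connectedComponentIn_subset _ _ hxF)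
    have : x ∈ interior Ωᶜ := interior_mono hBsub hxint
    rw [interior_compl] at this
    exact this hxcl
  have hzfr : z ∈ frontier B := hFfr (mem_connectedComponentIn hz)
  -- the complement of B is preconnected
  set U : Set (EuclideanSpace ℝ (Fin 2)) := Bᶜ with hUdef
  have hΩU : Ω ⊆ U := fun y hy hyB => (hBsub hyB) hy
  obtain ⟨w, hw⟩ := hΩconn.nonempty
  have hUconn : IsPreconnected U := by
    apply isPreconnected_of_forall w
    intro y hy
    by_cases hyΩ : y ∈ Ω
    · exact ⟨Ω, hΩU, hw, hyΩ, hΩconn.isPreconnected⟩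
    · have hyc : y ∈ Ωᶜ := hyΩ
      have hKU : connectedComponentIn Ωᶜ y ⊆ U := by
        intro t ht htB
        have h1 : connectedComponentIn Ωᶜ y = connectedComponentIn Ωᶜ t :=
          connectedComponentIn_eq ht
        have h2 : B = connectedComponentIn Ωᶜ t := connectedComponentIn_eq htB
        have : y ∈ B := by
          rw [h2, ← h1]
          exact mem_connectedComponentIn hyc
        exact hy this
      obtain ⟨c, hcK, hccl⟩ := htouch y hyc
      have hT : IsPreconnected (Ω ∪ {c}) :=
        hΩconn.isPreconnected.subset_closure subset_union_left
          (union_subset subset_closure (singleton_subset_iff.mpr hccl))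
      have hS : IsPreconnected ((Ω ∪ {c}) ∪ connectedComponentIn Ωᶜ y) :=
        IsPreconnected.union' ⟨c, Or.inr rfl, hcK⟩ hT isPreconnected_connectedComponentIn
      refine ⟨(Ω ∪ {c}) ∪ connectedComponentIn Ωᶜ y, ?_, Or.inl (Or.inl hw),
        Or.inr (mem_connectedComponentIn hyc), hS⟩
      rintro t ((ht | ht) | ht)
      · exact hΩU ht
      · rw [mem_singleton_iff] at ht
        exact ht ▸ hKU hcK
      · exact hKU ht
  set A : Set (EuclideanSpace ℝ (Fin 2)) := closure U with hAdef
  have hAclosed : IsClosed A := isClosed_closure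
  have hAconn : IsPreconnected A := hUconn.closure
  have hcov : A ∪ B = univ := by
    rw [eq_univ_iff_forall]
    intro x
    by_cases hxB : x ∈ B
    · exact Or.inr hxB
    · exact Or.inl (subset_closure hxB)
  have hABfr : A ∩ B = frontier B := by
    rw [hAdef, hUdef, closure_compl, hBclosed.frontier_eq, diff_eq, inter_comm]
  have hfrconn : IsPreconnected (frontier B) :=
    hABfr ▸ unicoherence_plane hAclosed hBclosed hAconn hBconn hcov
  exact Subset.antisymm
    (hfrconn.subset_connectedComponentIn hzfr hfrB) hFfr
end

section
/- Let Ω ⊆ ℝ² be a bounded domain with H^1(∂Ω) < ∞, and let x ∈ ∂Ω and r > 0. Then only finitely many connected components of Ω ∩ B(x, 2r) intersect the ball B(x, r). -/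
open MeasureTheory Metric

open Set Complex Real ENNReal Filter

section Auxiliary

/-- Exit point lemma: if `c a ∈ F`, `c b ∉ F`, `F` is open, and every point of
`closure F ∩ W` lies in `F`, then there is `s ∈ [a,b)` with `c s ∈ closure F \ W`. -/
private lemma exists_exit {X : Type*} [MetricSpace X] {c : ℝ → X} (hc : Continuous c)
    {a b : ℝ} (hab : a ≤ b) {F W : Set X} (hF : IsOpen F)
    (hmax : ∀ y, y ∈ closure F → y ∈ W → y ∈ F)
    (ha : c a ∈ F) (hb : c b ∉ F) (hbW : c b ∈ W) :
    ∃ s ∈ Ico a b, c s ∈ closure F \ W := by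
  set T : Set ℝ := {t ∈ Icc a b | Icc a t ⊆ c ⁻¹' F} with hT
  have hTa : a ∈ T := ⟨⟨le_rfl, hab⟩, by simpa [Set.Icc_self] using ha⟩
  have hTne : T.Nonempty := ⟨a, hTa⟩
  have hTbdd : BddAbove T := ⟨b, fun t ht => ht.1.2⟩
  set s := sSup T with hs
  have hsa : a ≤ s := le_csSup hTbdd hTa
  have hsb : s ≤ b := csSup_le hTne fun t ht => ht.1.2
  have hTF : T ⊆ c ⁻¹' F := fun t ht => ht.2 ⟨ht.1.1, le_rfl⟩
  have hcs : c s ∈ closure F := by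
    have h1 : s ∈ closure T := csSup_mem_closure hTne hTbdd
    have h2 : s ∈ closure (c ⁻¹' F) := closure_mono hTF h1
    exact hc.closure_preimage_subset F h2
  have hcsW : c s ∉ W := by
    intro hw
    have hsF : c s ∈ F := hmax _ hcs hw
    have hsbne : s < b := by
      rcases lt_or_eq_of_le hsb with h | h
      · exact h
      · exact absurd (h ▸ hsF) hb
    obtain ⟨ε, hε, hball⟩ := Metric.isOpen_iff.1 (hF.preimage hc) s hsF
    set t' := min (s + ε / 2) b with ht'
    have hst' : s < t' := lt_min (by linarith) hsbne
    have ht'T : t' ∈ T := by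
      refine ⟨⟨hsa.trans hst'.le, min_le_right _ _⟩, fun u hu => ?_⟩
      rcases lt_or_ge u s with h | h
      · obtain ⟨t'', ht''T, ht''⟩ := exists_lt_of_lt_csSup hTne h
        exact ht''T.2 ⟨hu.1, ht''.le⟩
      · apply hball
        have : u ≤ s + ε / 2 := hu.2.trans (min_le_left _ _)
        simp only [Metric.mem_ball, Real.dist_eq, abs_sub_lt_iff]
        constructor <;> linarith
    exact absurd (le_csSup hTbdd ht'T) (not_le.2 hst')
  have hsblt : s < b := by
    rcases lt_or_eq_of_le hsb with h | h
    · exact h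
    · exact absurd (h ▸ hbW) hcsW
  exact ⟨s, ⟨hsa, hsblt⟩, hcs, hcsW⟩

/-- Points of `V` in the closure of a connected component of `V` belong to the component. -/
private lemma mem_connCompIn_of_closure {X : Type*} [TopologicalSpace X]
    [LocallyConnectedSpace X] {V : Set X} (hV : IsOpen V) {z y : X}
    (hy : y ∈ closure (connectedComponentIn V z)) (hyV : y ∈ V) :
    y ∈ connectedComponentIn V z := by
  have hopen : IsOpen (connectedComponentIn V y) := hV.connectedComponentIn
  have hmem : y ∈ connectedComponentIn V y := mem_connectedComponentIn hyV
  obtain ⟨w, hw1, hw2⟩ := mem_closure_iff.1 hy _ hopen hmem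
  have h1 : connectedComponentIn V y = connectedComponentIn V w := connectedComponentIn_eq hw1
  have h2 : connectedComponentIn V z = connectedComponentIn V w := connectedComponentIn_eq hw2
  rw [h2, ← h1]; exact hmem

/-- Distinct connected components are disjoint. -/
private lemma connCompIn_disjoint {X : Type*} [TopologicalSpace X] {V : Set X} {z z' : X}
    (h : connectedComponentIn V z ≠ connectedComponentIn V z') :
    Disjoint (connectedComponentIn V z) (connectedComponentIn V z') := by
  rw [Set.disjoint_iff_inter_eq_empty]
  by_contra hne
  obtain ⟨w, hw1, hw2⟩ := Set.nonempty_iff_ne_empty.2 hne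
  exact h ((connectedComponentIn_eq hw1).trans (connectedComponentIn_eq hw2).symm)

/-- A component meeting the inner ball crosses every sphere of radius `ρ ∈ [r, R)`,
provided `Ω` is not contained in `ball x R`. -/
private lemma good_component_meets_sphere {X : Type*} [MetricSpace X] [LocallyConnectedSpace X]
    {Ω : Set X} (hΩopen : IsOpen Ω) (hΩconn : IsPreconnected Ω)
    {x : X} {r R : ℝ} (hnots : ¬ Ω ⊆ ball x R)
    {C : Set X} {z : X} (hz : z ∈ Ω ∩ ball x R)
    (hC : C = connectedComponentIn (Ω ∩ ball x R) z)
    (hmeet : (C ∩ ball x r).Nonempty) {ρ : ℝ} (hρ : ρ ∈ Ico r R) :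
    (C ∩ sphere x ρ).Nonempty := by
  have hV : IsOpen (Ω ∩ ball x R) := hΩopen.inter isOpen_ball
  have hCopen : IsOpen C := hC ▸ hV.connectedComponentIn
  have hCconn : IsConnected C := by
    rw [hC]; exact isConnected_connectedComponentIn_iff.2 hz
  have hCsub : C ⊆ Ω ∩ ball x R := hC ▸ connectedComponentIn_subset _ _
  have hfar : ∃ p ∈ C, ρ < dist p x := by
    by_contra hnf
    push_neg at hnf
    have hCcb : C ⊆ closedBall x ρ := fun p hp => mem_closedBall.2 (hnf p hp)
    have hclosC : closure C ∩ Ω ⊆ C := by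
      intro y hy
      have hyb : y ∈ ball x R :=
        lt_of_le_of_lt (mem_closedBall.1 ((closure_minimal hCcb isClosed_closedBall) hy.1)) hρ.2
      exact hC ▸ mem_connCompIn_of_closure hV (hC ▸ hy.1) ⟨hy.2, hyb⟩
    have hcover : Ω ⊆ C ∪ (closure C)ᶜ := by
      intro y hy
      by_cases h : y ∈ closure C
      · exact Or.inl (hclosC ⟨h, hy⟩)
      · exact Or.inr h
    have hΩC : (Ω ∩ C).Nonempty := ⟨z, hz.1, hC ▸ mem_connectedComponentIn hz⟩
    have hΩv : ¬ (Ω ∩ (closure C)ᶜ).Nonempty := by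
      intro hne
      obtain ⟨y, hy⟩ :=
        hΩconn C (closure C)ᶜ hCopen isClosed_closure.isOpen_compl hcover hΩC hne
      exact hy.2.2 (subset_closure hy.2.1)
    apply hnots
    intro y hy
    rcases hcover hy with h | h
    · exact (hCsub h).2
    · exact absurd ⟨y, hy, h⟩ hΩv
  obtain ⟨p, hpC, hpρ⟩ := hfar
  obtain ⟨q, hqC, hqb⟩ := hmeet
  have hq : dist q x < ρ := lt_of_lt_of_le (mem_ball.1 hqb) hρ.1
  have hcont : ContinuousOn (fun y => dist y x) C :=
    (continuous_id.dist continuous_const).continuousOn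
  have hIcc : Icc (dist q x) (dist p x) ⊆ (fun y => dist y x) '' C :=
    hCconn.isPreconnected.intermediate_value hqC hpC hcont
  obtain ⟨w, hwC, hw⟩ := hIcc ⟨hq.le, hpρ.le⟩
  exact ⟨w, hwC, by simpa [mem_sphere] using hw⟩

/-- `circleMap` is injective on `(-π, π]`. -/
private lemma circleMap_injOn' {z : ℂ} {ρ : ℝ} (hρ : 0 < ρ) :
    Set.InjOn (circleMap z ρ) (Set.Ioc (-π) π) := by
  intro a ha b hb h
  have h1 : Complex.exp (a * I) = Complex.exp (b * I) := by
    simp only [circleMap] at h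
    have h2 : (ρ : ℂ) * Complex.exp (a * I) = (ρ : ℂ) * Complex.exp (b * I) :=
      add_left_cancel h
    exact mul_left_cancel₀ (by exact_mod_cast hρ.ne') h2
  have ha' : Complex.arg (Complex.exp (a * I)) = a := by
    rw [Complex.exp_mul_I]; exact Complex.arg_cos_add_sin_mul_I ha
  have hb' : Complex.arg (Complex.exp (b * I)) = b := by
    rw [Complex.exp_mul_I]; exact Complex.arg_cos_add_sin_mul_I hb
  rw [← ha', ← hb', h1]

/-- `circleMap` is surjective onto the sphere, with angles in `(-π, π]`. -/
private lemma circleMap_surjOn' {z : ℂ} {ρ : ℝ} {w : ℂ} (hw : w ∈ sphere z ρ) :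
    ∃ θ ∈ Set.Ioc (-π) π, circleMap z ρ θ = w := by
  refine ⟨(w - z).arg, Complex.arg_mem_Ioc _, ?_⟩
  have habs : (‖w - z‖ : ℝ) = ρ := by
    rw [← Complex.dist_eq]; exact mem_sphere.1 hw
  simp only [circleMap]
  rw [← habs, Complex.norm_mul_exp_arg_mul_I]
  ring

/-- Given `m + 2` distinct components of `Ω ∩ ball x R` all meeting the sphere of
radius `ρ < R`, the frontier of `Ω` meets that sphere in at least `m + 1` points. -/
private lemma fiber_points (Ω : Set (EuclideanSpace ℝ (Fin 2))) (hΩopen : IsOpen Ω)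
    {x : EuclideanSpace ℝ (Fin 2)} {R ρ : ℝ}
    (hρ0 : 0 < ρ) (hρR : ρ < R) {m : ℕ} (C : Fin (m + 2) → Set (EuclideanSpace ℝ (Fin 2)))
    (hCcomp : ∀ i, ∃ z ∈ Ω ∩ ball x R, C i = connectedComponentIn (Ω ∩ ball x R) z)
    (hCinj : Function.Injective C)
    (hmeets : ∀ i, (C i ∩ sphere x ρ).Nonempty) :
    ∃ y : Fin (m + 1) → EuclideanSpace ℝ (Fin 2), Function.Injective y ∧
      ∀ j, y j ∈ frontier Ω ∩ sphere x ρ := by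
  classical
  set V := Ω ∩ ball x R with hVdef
  have hV : IsOpen V := hΩopen.inter isOpen_ball
  set e := Complex.orthonormalBasisOneI.repr with he
  set zx := e.symm x with hzx
  set c : ℝ → EuclideanSpace ℝ (Fin 2) := fun θ => e (circleMap zx ρ θ) with hc
  have hccont : Continuous c := e.continuous.comp (continuous_circleMap _ _)
  have hcsph : ∀ θ, c θ ∈ sphere x ρ := by
    intro θ
    have h1 : circleMap zx ρ θ ∈ sphere zx ρ := circleMap_mem_sphere zx hρ0.le θ
    have : dist (c θ) x = ρ := by
      rw [hc]
      have hx : x = e zx := (e.apply_symm_apply x).symm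
      rw [hx, e.dist_map]
      exact mem_sphere.1 h1
    exact mem_sphere.2 this
  have hcsurj : ∀ y ∈ sphere x ρ, ∃ θ ∈ Set.Ioc (-π) π, c θ = y := by
    intro y hy
    have h1 : e.symm y ∈ sphere zx ρ := by
      rw [mem_sphere, hzx, e.symm.dist_map]
      exact mem_sphere.1 hy
    obtain ⟨θ, hθ, hθ2⟩ := circleMap_surjOn' h1
    exact ⟨θ, hθ, by rw [hc]; simp only [hθ2]; exact e.apply_symm_apply y⟩
  have hq : ∀ i, ∃ θ ∈ Set.Ioc (-π) π, c θ ∈ C i := by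
    intro i
    obtain ⟨q, hq1, hq2⟩ := hmeets i
    obtain ⟨θ, hθ, hθ2⟩ := hcsurj q hq2
    exact ⟨θ, hθ, hθ2 ▸ hq1⟩
  choose θi hθIoc hθC using hq
  have hCdisj : ∀ i j, i ≠ j → Disjoint (C i) (C j) := by
    intro i j hij
    obtain ⟨zi, hzi, hCi⟩ := hCcomp i
    obtain ⟨zj, hzj, hCj⟩ := hCcomp j
    rw [hCi, hCj]
    exact connCompIn_disjoint (by rw [← hCi, ← hCj]; exact fun h => hij (hCinj h))
  have hθinj : Function.Injective θi := by
    intro i j h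
    by_contra hij
    exact Set.disjoint_left.1 (hCdisj i j hij) (hθC i) (h ▸ hθC j)
  set Θ : Finset ℝ := Finset.image θi Finset.univ with hΘ
  have hcard : Θ.card = m + 2 := by
    rw [hΘ, Finset.card_image_of_injective _ hθinj, Finset.card_univ, Fintype.card_fin]
  set oi := Θ.orderIsoOfFin hcard with hoi
  have hΘIoc : ∀ t ∈ Θ, t ∈ Set.Ioc (-π) π := by
    intro t ht
    obtain ⟨i, -, rfl⟩ := Finset.mem_image.1 ht
    exact hθIoc i
  have hΘmem : ∀ t ∈ Θ, ∃ i, θi i = t := by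
    intro t ht
    obtain ⟨i, -, h⟩ := Finset.mem_image.1 ht
    exact ⟨i, h⟩
  have hidx : ∀ j : Fin (m + 1), ∃ i, θi i = (oi j.castSucc : ℝ) :=
    fun j => hΘmem _ (oi j.castSucc).2
  choose idx hidx' using hidx
  have hidx2 : ∀ j : Fin (m + 1), ∃ i, θi i = (oi j.succ : ℝ) :=
    fun j => hΘmem _ (oi j.succ).2
  choose idx2 hidx2' using hidx2
  have hablt : ∀ j : Fin (m + 1), (oi j.castSucc : ℝ) < (oi j.succ : ℝ) :=
    fun j => oi.strictMono (Fin.castSucc_lt_succ (i := j))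
  have hexit : ∀ j : Fin (m + 1), ∃ s ∈ Ico (oi j.castSucc : ℝ) (oi j.succ : ℝ),
      c s ∈ closure (C (idx j)) \ V := by
    intro j
    obtain ⟨z, hz, hCz⟩ := hCcomp (idx j)
    have hmax : ∀ y, y ∈ closure (C (idx j)) → y ∈ V → y ∈ C (idx j) := by
      intro y h1 h2
      rw [hCz] at h1 ⊢
      exact mem_connCompIn_of_closure hV h1 h2
    have hFopen : IsOpen (C (idx j)) := hCz ▸ hV.connectedComponentIn
    have ha : c (oi j.castSucc : ℝ) ∈ C (idx j) := by rw [← hidx' j]; exact hθC _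
    have hii : idx2 j ≠ idx j := by
      intro h
      have := (hidx2' j).symm.trans (h ▸ hidx' j : θi (idx2 j) = _)
      exact absurd this (ne_of_gt (hablt j))
    have hb : c (oi j.succ : ℝ) ∉ C (idx j) := by
      rw [← hidx2' j]
      exact Set.disjoint_left.1 (hCdisj (idx2 j) (idx j) hii) (hθC (idx2 j))
    have hbW : c (oi j.succ : ℝ) ∈ V := by
      rw [← hidx2' j]
      obtain ⟨z2, hz2, hC2⟩ := hCcomp (idx2 j)
      exact (hC2 ▸ connectedComponentIn_subset _ _) (hθC (idx2 j))
    exact exists_exit hccont (hablt j).le hFopen hmax ha hb hbW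
  choose s hs hcs using hexit
  refine ⟨fun j => c (s j), ?_, ?_⟩
  · have hsIoc : ∀ j, s j ∈ Set.Ioc (-π) π := by
      intro j
      constructor
      · exact lt_of_lt_of_le (hΘIoc _ (oi j.castSucc).2).1 (hs j).1
      · exact le_of_lt (lt_of_lt_of_le (hs j).2 (hΘIoc _ (oi j.succ).2).2)
    have hmono : ∀ j j' : Fin (m + 1), j < j' → s j < s j' := by
      intro j j' hjj
      have h1 : s j < (oi j.succ : ℝ) := (hs j).2
      have h2 : (oi j'.castSucc : ℝ) ≤ s j' := (hs j').1
      have h3 : (oi j.succ : ℝ) ≤ (oi j'.castSucc : ℝ) := by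
        apply oi.le_iff_le.2
        rw [Fin.le_def]
        simp only [Fin.val_succ, Fin.coe_castSucc]
        exact Nat.succ_le_of_lt hjj
      linarith
    intro j j' h
    have hse : s j = s j' := by
      have hee := congrArg e.symm h
      simp only [hc, LinearIsometryEquiv.symm_apply_apply] at hee
      exact circleMap_injOn' hρ0 (hsIoc j) (hsIoc j') hee
    rcases lt_trichotomy j j' with hlt | heq | hgt
    · exact absurd hse (ne_of_lt (hmono _ _ hlt))
    · exact heq
    · exact absurd hse.symm (ne_of_lt (hmono _ _ hgt))
  · intro j
    have h1 : c (s j) ∈ closure (C (idx j)) := (hcs j).1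
    have h2 : c (s j) ∉ V := (hcs j).2
    have hsub : C (idx j) ⊆ Ω := by
      obtain ⟨z, hz, hCz⟩ := hCcomp (idx j)
      exact fun w hw => ((hCz ▸ connectedComponentIn_subset _ _) hw).1
    have hclΩ : c (s j) ∈ closure Ω := closure_mono hsub h1
    have hball : c (s j) ∈ ball x R := by
      have hsp := hcsph (s j)
      rw [mem_sphere] at hsp
      exact mem_ball.2 (hsp ▸ hρR)
    have hnotΩ : c (s j) ∉ Ω := fun h => h2 ⟨h, hball⟩
    exact ⟨by rw [hΩopen.frontier_eq]; exact ⟨hclΩ, hnotΩ⟩, hcsph (s j)⟩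

/-- Eilenberg-type lower bound: if every sphere of radius `ρ ∈ (r₁, r₂)` around `x` meets
`E` in at least `m` points, then `μH[1] E ≥ m * (r₂ - r₁)`. -/
private lemma hausdorff_lower {X : Type*} [MetricSpace X] [MeasurableSpace X] [BorelSpace X]
    {E : Set X} {x : X} {r₁ r₂ : ℝ} (m : ℕ)
    (h : ∀ ρ ∈ Ioo r₁ r₂, ∃ y : Fin m → X, Function.Injective y ∧
      ∀ j, y j ∈ E ∧ dist (y j) x = ρ) :
    (m : ℝ≥0∞) * ENNReal.ofReal (r₂ - r₁) ≤ μH[1] E := by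
  classical
  rcases eq_top_or_lt_top (μH[1] E) with hM | hM
  · rw [hM]; exact le_top
  refine ENNReal.le_of_forall_pos_le_add fun ε hε _ => ?_
  have hε' : (ε : ℝ≥0∞) ≠ 0 := by exact_mod_cast hε.ne'
  set f : X → ℝ := fun y => dist y x with hf
  have hlip : LipschitzWith 1 f := LipschitzWith.dist_left x
  have hcov : ∀ n : ℕ, ∃ t : ℕ → Set X, (E ⊆ ⋃ k, t k) ∧
      (∀ k, EMetric.diam (t k) ≤ 1 / (n + 1)) ∧
      ∑' k, ⨆ _ : (t k).Nonempty, EMetric.diam (t k) ^ (1 : ℝ) < μH[1] E + ε := by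
    intro n
    have hpos : (0 : ℝ≥0∞) < 1 / (n + 1) := by
      apply ENNReal.div_pos one_ne_zero
      exact (add_lt_top.2 ⟨natCast_lt_top n, one_lt_top⟩).ne
    have hlt : (⨅ (t : ℕ → Set X) (_ : E ⊆ ⋃ k, t k)
        (_ : ∀ k, EMetric.diam (t k) ≤ 1 / (n + 1)),
        ∑' k, ⨆ _ : (t k).Nonempty, EMetric.diam (t k) ^ (1 : ℝ)) < μH[1] E + ε := by
      refine lt_of_le_of_lt ?_ (ENNReal.lt_add_right hM.ne hε')
      rw [MeasureTheory.Measure.hausdorffMeasure_apply]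
      exact le_iSup_of_le (1 / (n + 1)) (le_iSup_of_le hpos le_rfl)
    obtain ⟨t, hlt⟩ := iInf_lt_iff.1 hlt
    obtain ⟨h1, hlt⟩ := iInf_lt_iff.1 hlt
    obtain ⟨h2, hlt⟩ := iInf_lt_iff.1 hlt
    exact ⟨t, h1, h2, hlt⟩
  choose t htcov htdiam htsum using hcov
  set g : ℕ → ℝ → ℝ≥0∞ := fun n ρ =>
    ∑' k, (closure (f '' t n k)).indicator (fun _ => (1 : ℝ≥0∞)) ρ with hg
  have hgmeas : ∀ n, Measurable (g n) :=
    fun n => Measurable.ennreal_tsum fun k =>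
      measurable_const.indicator isClosed_closure.measurableSet
  have hgint : ∀ n, ∫⁻ ρ, g n ρ ≤ μH[1] E + ε := by
    intro n
    rw [hg]
    simp only
    rw [lintegral_tsum fun k =>
      (measurable_const.indicator isClosed_closure.measurableSet).aemeasurable]
    refine le_trans (ENNReal.tsum_le_tsum fun k => ?_) (htsum n).le
    rw [lintegral_indicator_const isClosed_closure.measurableSet]
    rcases Set.eq_empty_or_nonempty (t n k) with hk | hk
    · simp [hk]
    · rw [one_mul]
      have h1 : volume (closure (f '' t n k)) ≤ EMetric.diam (closure (f '' t n k)) :=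
        Real.volume_le_diam _
      rw [EMetric.diam, EMetric.diam_closure] at h1
      have h2 : EMetric.diam (f '' t n k) ≤ EMetric.diam (t n k) := by
        simpa [EMetric.diam] using hlip.ediam_image_le (t n k)
      rw [ciSup_pos hk, ENNReal.rpow_one]
      exact le_trans h1 h2
  have hglim : ∀ ρ ∈ Ioo r₁ r₂, (m : ℝ≥0∞) ≤ liminf (fun n => g n ρ) atTop := by
    intro ρ hρ
    obtain ⟨y, hyinj, hy⟩ := h ρ hρ
    have hδ : ∃ δ : ℝ≥0∞, 0 < δ ∧ ∀ j j', j ≠ j' → δ ≤ edist (y j) (y j') := by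
      set P : Finset (Fin m × Fin m) := Finset.univ.filter (fun p => p.1 ≠ p.2) with hP
      by_cases hPne : P.Nonempty
      · refine ⟨P.inf' hPne (fun p => edist (y p.1) (y p.2)), ?_, ?_⟩
        · rw [Finset.lt_inf'_iff]
          intro p hp
          have hne : p.1 ≠ p.2 := (Finset.mem_filter.1 hp).2
          exact edist_pos.2 fun hc => hne (hyinj hc)
        · intro j j' hjj
          have hmem : ((j, j') : Fin m × Fin m) ∈ P :=
            Finset.mem_filter.2 ⟨Finset.mem_univ _, hjj⟩
          exact Finset.inf'_le (fun p => edist (y p.1) (y p.2)) hmem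
      · exact ⟨1, zero_lt_one, fun j j' hjj =>
          absurd ⟨(j, j'), Finset.mem_filter.2 ⟨Finset.mem_univ _, hjj⟩⟩ hPne⟩
    obtain ⟨δ, hδpos, hδle⟩ := hδ
    obtain ⟨n₀, hn₀⟩ := ENNReal.exists_inv_nat_lt hδpos.ne'
    have hev : ∀ n ≥ n₀, (m : ℝ≥0∞) ≤ g n ρ := by
      intro n hn
      have hdiam : ∀ k, EMetric.diam (t n k) < δ := by
        intro k
        refine lt_of_le_of_lt (htdiam n k) (lt_of_le_of_lt ?_ hn₀)
        rw [one_div]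
        apply ENNReal.inv_le_inv.2
        have : (n₀ : ℝ≥0∞) ≤ (n : ℝ≥0∞) + 1 := by exact_mod_cast Nat.le_succ_of_le hn
        exact this
      have hκ : ∀ j : Fin m, ∃ k, y j ∈ t n k := by
        intro j
        have := htcov n (hy j).1
        simpa using this
      choose κ hκ' using hκ
      have hκinj : Function.Injective κ := by
        intro j j' hjj
        by_contra hne
        have h1 : edist (y j) (y j') ≤ EMetric.diam (t n (κ j)) :=
          EMetric.edist_le_diam_of_mem (hκ' j) (hjj ▸ hκ' j')
        exact absurd (lt_of_le_of_lt h1 (hdiam _)) (not_lt.2 (hδle j j' hne))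
      have hind : ∀ j, (closure (f '' t n (κ j))).indicator (fun _ => (1 : ℝ≥0∞)) ρ = 1 := by
        intro j
        rw [Set.indicator_of_mem]
        apply subset_closure
        exact ⟨y j, hκ' j, (hy j).2⟩
      calc (m : ℝ≥0∞) = ∑ k ∈ Finset.image κ Finset.univ,
            (closure (f '' t n k)).indicator (fun _ => (1 : ℝ≥0∞)) ρ := by
            rw [Finset.sum_image (fun a _ b _ h => hκinj h)]
            simp only [hind]
            simp
        _ ≤ g n ρ := ENNReal.sum_le_tsum _
    refine le_liminf_of_le (by isBoundedDefault) ?_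
    exact eventually_atTop.2 ⟨n₀, hev⟩
  have step1 : (m : ℝ≥0∞) * ENNReal.ofReal (r₂ - r₁) =
      ∫⁻ ρ, (Ioo r₁ r₂).indicator (fun _ => (m : ℝ≥0∞)) ρ := by
    rw [lintegral_indicator_const measurableSet_Ioo, Real.volume_Ioo]
  rw [step1]
  calc ∫⁻ ρ, (Ioo r₁ r₂).indicator (fun _ => (m : ℝ≥0∞)) ρ
      ≤ ∫⁻ ρ, liminf (fun n => g n ρ) atTop := by
        refine lintegral_mono fun ρ => ?_
        by_cases hρ : ρ ∈ Ioo r₁ r₂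
        · rw [Set.indicator_of_mem hρ]; exact hglim ρ hρ
        · rw [Set.indicator_of_notMem hρ]; exact zero_le
    _ ≤ liminf (fun n => ∫⁻ ρ, g n ρ) atTop := lintegral_liminf_le hgmeas
    _ ≤ μH[1] E + ε := by
        refine liminf_le_of_frequently_le (Frequently.of_forall fun n => hgint n) ?_
        isBoundedDefault

end Auxiliary

theorem finitely_many_components_meeting_ball
    (Ω : Set (EuclideanSpace ℝ (Fin 2)))
    (hΩopen : IsOpen Ω) (hΩconn : IsConnected Ω)
    (hΩbdd : Bornology.IsBounded Ω)
    (hfin : μH[1] (frontier Ω) < ⊤)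
    (x : EuclideanSpace ℝ (Fin 2)) (hx : x ∈ frontier Ω)
    (r : ℝ) (hr : 0 < r) :
    {C : Set (EuclideanSpace ℝ (Fin 2)) |
      (∃ z ∈ Ω ∩ ball x (2 * r), C = connectedComponentIn (Ω ∩ ball x (2 * r)) z) ∧
        (C ∩ ball x r).Nonempty}.Finite := by
  classical
  by_cases hsub : Ω ⊆ ball x (2 * r)
  · refine (Set.finite_singleton Ω).subset ?_
    rintro C ⟨⟨z, hz, hCz⟩, -⟩
    have hinter : Ω ∩ ball x (2 * r) = Ω := Set.inter_eq_self_of_subset_left hsub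
    rw [hinter] at hz hCz
    rw [Set.mem_singleton_iff, hCz, hΩconn.isPreconnected.connectedComponentIn hz]
  · by_contra hfinite
    have hinf : {C : Set (EuclideanSpace ℝ (Fin 2)) |
      (∃ z ∈ Ω ∩ ball x (2 * r), C = connectedComponentIn (Ω ∩ ball x (2 * r)) z) ∧
        (C ∩ ball x r).Nonempty}.Infinite := hfinite
    have hrne : ENNReal.ofReal r ≠ 0 := by
      simp [ENNReal.ofReal_eq_zero, not_le, hr]
    have hdivlt : μH[1] (frontier Ω) / ENNReal.ofReal r ≠ ⊤ :=
      (ENNReal.div_lt_top hfin.ne hrne).ne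
    obtain ⟨n, hn⟩ := ENNReal.exists_nat_gt hdivlt
    have hMlt : μH[1] (frontier Ω) < (n : ℝ≥0∞) * ENNReal.ofReal r := by
      rw [← ENNReal.div_lt_iff (Or.inl hrne) (Or.inl ENNReal.ofReal_ne_top)]
      exact hn
    obtain ⟨T, hTsub, hTcard⟩ := hinf.exists_subset_card_eq (n + 2)
    set eq := T.equivFinOfCardEq hTcard with heq
    set C : Fin (n + 2) → Set (EuclideanSpace ℝ (Fin 2)) := fun i => (eq.symm i : Set _)
      with hC
    have hCinj : Function.Injective C :=
      Subtype.coe_injective.comp eq.symm.injective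
    have hCmem : ∀ i, C i ∈ {C : Set (EuclideanSpace ℝ (Fin 2)) |
      (∃ z ∈ Ω ∩ ball x (2 * r), C = connectedComponentIn (Ω ∩ ball x (2 * r)) z) ∧
        (C ∩ ball x r).Nonempty} := fun i => hTsub (eq.symm i).2
    have hmain : ∀ ρ ∈ Set.Ioo r (2 * r),
        ∃ y : Fin (n + 1) → EuclideanSpace ℝ (Fin 2), Function.Injective y ∧
          ∀ j, y j ∈ frontier Ω ∧ dist (y j) x = ρ := by
      intro ρ hρ
      have hρ0 : 0 < ρ := hr.trans hρ.1
      have hmeets : ∀ i, (C i ∩ sphere x ρ).Nonempty := by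
        intro i
        obtain ⟨⟨z, hz, hCz⟩, hmeet⟩ := hCmem i
        exact good_component_meets_sphere hΩopen hΩconn.isPreconnected hsub hz hCz hmeet
          ⟨hρ.1.le, hρ.2⟩
      obtain ⟨y, hyinj, hy⟩ := fiber_points Ω hΩopen hρ0 hρ.2 C
        (fun i => (hCmem i).1) hCinj hmeets
      exact ⟨y, hyinj, fun j => ⟨(hy j).1, mem_sphere.1 (hy j).2⟩⟩
    have hlower : ((n + 1 : ℕ) : ℝ≥0∞) * ENNReal.ofReal (2 * r - r) ≤ μH[1] (frontier Ω) :=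
      hausdorff_lower (n + 1) hmain
    have h2rr : 2 * r - r = r := by ring
    rw [h2rr] at hlower
    have hle : (n : ℝ≥0∞) * ENNReal.ofReal r ≤ ((n + 1 : ℕ) : ℝ≥0∞) * ENNReal.ofReal r := by
      apply mul_le_mul_left
      exact_mod_cast Nat.le_succ n
    exact absurd (le_trans hle hlower) (not_le.2 hMlt)
end

section
/- Let Ω ⊆ ℝ² be a bounded domain with H^1(∂Ω) < ∞. Then for every x ∈ ∂Ω and ε > 0 there exist r > 0 and a subdomain Ω' ⊆ Ω such that x ∈ ∂Ω', diam(Ω') ≤ ε, H^1(∂Ω') ≤ ε, and ∂Ω' ⊆ ∂Ω ∪ ∂B(x, r). -/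
open MeasureTheory Metric

section Helpers

open Set Filter Complex
open scoped ENNReal NNReal Topology

/-- Points of the ambient open set that are in the closure of a connected component of it
are in the component. -/
lemma mem_ccIn_of_mem_closure {α : Type*} [TopologicalSpace α] [LocallyConnectedSpace α]
    {U : Set α} (hU : IsOpen U) {y z : α} (hz : z ∈ U)
    (hcl : z ∈ closure (connectedComponentIn U y)) : z ∈ connectedComponentIn U y := by
  have hD : IsOpen (connectedComponentIn U z) := hU.connectedComponentIn
  have hzD : z ∈ connectedComponentIn U z := mem_connectedComponentIn hz
  obtain ⟨w, hwD, hwC⟩ := mem_closure_iff.mp hcl _ hD hzD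
  have h1 := connectedComponentIn_eq hwD
  have h2 := connectedComponentIn_eq hwC
  have heq : connectedComponentIn U z = connectedComponentIn U y := h1.trans h2.symm
  rw [← heq]
  exact mem_connectedComponentIn hz

/-- Shrinking the radius makes the boundary measure in the closed ball small. -/
lemma exists_small_closedBall_measure (S : Set ℂ) (hS : IsClosed S)
    (hfin : μH[1] S ≠ ⊤) (x : ℂ) {η : ℝ≥0∞} (hη : 0 < η) {R₀ : ℝ} (hR₀ : 0 < R₀) :
    ∃ R : ℝ, 0 < R ∧ R ≤ R₀ ∧ μH[1] (S ∩ Metric.closedBall x R) < η := by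
  haveI : NullSingletonClass (μH[1] : Measure ℂ) := Measure.noAtoms_hausdorff ℂ one_pos
  set s : ℕ → Set ℂ := fun n => S ∩ Metric.closedBall x (1 / (n + 1)) with hs
  have hmeas : ∀ n, NullMeasurableSet (s n) (μH[1] : Measure ℂ) := fun n =>
    ((hS.measurableSet.inter measurableSet_closedBall)).nullMeasurableSet
  have hanti : Antitone s := by
    intro m n hmn
    refine Set.inter_subset_inter_right _ (Metric.closedBall_subset_closedBall ?_)
    have : (m : ℝ) ≤ n := Nat.cast_le.mpr hmn
    apply one_div_le_one_div_of_le <;> linarith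
  have hne : ∃ n, μH[1] (s n) ≠ ⊤ := ⟨0, (lt_of_le_of_lt (measure_mono Set.inter_subset_left)
    hfin.lt_top).ne⟩
  have hinter : ⋂ n, s n ⊆ {x} := by
    intro z hz
    simp only [Set.mem_iInter, hs, Set.mem_inter_iff, Metric.mem_closedBall] at hz
    have : dist z x ≤ 0 := by
      refine le_of_forall_pos_le_add fun δ hδ => ?_
      obtain ⟨n, hn⟩ := exists_nat_one_div_lt hδ
      have := (hz n).2
      push_cast at this hn ⊢
      linarith
    have hz0 : dist z x = 0 := le_antisymm this dist_nonneg
    simp [Set.mem_singleton_iff, ← dist_le_zero, hz0]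
  have hlim := tendsto_measure_iInter_atTop (μ := (μH[1] : Measure ℂ)) hmeas hanti hne
  have h0 : μH[1] (⋂ n, s n) = 0 := by
    have := measure_mono (μ := (μH[1] : Measure ℂ)) hinter
    simpa [measure_singleton] using this
  rw [h0] at hlim
  have hev : ∀ᶠ n : ℕ in Filter.atTop, μH[1] (s n) < η := hlim.eventually_lt_const hη
  obtain ⟨n₀, hn₀⟩ := Filter.eventually_atTop.mp hev
  obtain ⟨m, hm⟩ := exists_nat_one_div_lt hR₀
  refine ⟨1 / (max n₀ m + 1), by positivity, ?_, ?_⟩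
  · have h1 : (m : ℝ) ≤ max n₀ m := Nat.cast_le.mpr (le_max_right _ _)
    calc (1 : ℝ) / (max n₀ m + 1) ≤ 1 / (m + 1) := by
          apply one_div_le_one_div_of_le
          · positivity
          · linarith
        _ ≤ R₀ := hm.le
  · exact hn₀ (max n₀ m) (le_max_left _ _)

/-- Hausdorff measure of a circle is at most its length. -/
lemma hausdorffMeasure_sphere_le (x : ℂ) {R : ℝ} (hR : 0 < R) :
    μH[1] (sphere x R) ≤ ENNReal.ofReal (2 * Real.pi * R) := by
  have himg : sphere x R = circleMap x R '' Set.Ioc 0 (2 * Real.pi) := by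
    rw [image_circleMap_Ioc, abs_of_pos hR]
  rw [himg]
  have hlip := lipschitzWith_circleMap x R
  have := hlip.hausdorffMeasure_image_le (d := 1) zero_le_one (Set.Ioc 0 (2 * Real.pi))
  refine this.trans ?_
  have hIoc : μH[1] (Set.Ioc (0:ℝ) (2 * Real.pi)) = ENNReal.ofReal (2 * Real.pi) := by
    rw [MeasureTheory.hausdorffMeasure_real]
    simp [Real.volume_Ioc]
  rw [hIoc, ENNReal.rpow_one]
  have hco : ((Real.nnabs R : ℝ≥0) : ℝ≥0∞) = ENNReal.ofReal R := by
    simp [ENNReal.ofReal, Real.nnabs, Real.toNNReal]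
    norm_cast
    simp [NNReal.eq_iff, Real.coe_toNNReal', abs_of_pos hR, le_of_lt hR]
    exact abs_of_pos hR
  rw [hco, ← ENNReal.ofReal_mul (le_of_lt hR)]
  · apply ENNReal.ofReal_le_ofReal; ring_nf; exact le_refl _

/-- There are circles around `x` meeting a set of finite `H^1` measure in a finite set. -/
lemma exists_finite_sphere_inter (K : Set ℂ) (hKfin : μH[1] K ≠ ⊤) (x : ℂ)
    {a b : ℝ} (hab : a < b) :
    ∃ t ∈ Set.Ioo a b, (K ∩ sphere x t).Finite := by
  classical
  by_contra hcon
  push_neg at hcon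
  have hinf : ∀ t ∈ Set.Ioo a b, (K ∩ sphere x t).Infinite := fun t ht => hcon t ht
  set c : ℝ≥0∞ := ENNReal.ofReal (b - a) with hcdef
  have hc0 : c ≠ 0 := by
    simp only [hcdef, ne_eq, ENNReal.ofReal_eq_zero, not_le]
    linarith
  have hcT : c ≠ ⊤ := ENNReal.ofReal_ne_top
  have hc20 : c / 2 ≠ 0 := by
    simp only [ne_eq, ENNReal.div_eq_zero_iff, not_or]
    exact ⟨hc0, by norm_num⟩
  have hc2T : c / 2 ≠ ⊤ := by
    exact (ENNReal.div_lt_top hcT (by norm_num)).ne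
  -- choose the multiplicity M
  have hfrac : (μH[1] K + 1) * 2 / (c / 2) ≠ ⊤ :=
    (ENNReal.div_lt_top (by
      exact ENNReal.mul_ne_top (by simp [ENNReal.add_ne_top, hKfin]) (by norm_num)) hc20).ne
  obtain ⟨M, hM⟩ := ENNReal.exists_nat_gt hfrac
  have hM' : (μH[1] K + 1) * 2 < (M : ℝ≥0∞) * (c / 2) :=
    (ENNReal.div_lt_iff (Or.inl hc20) (Or.inl hc2T)).mp hM
  -- the sets of radii with M well-separated points in the fiber
  set T : ℕ → Set ℝ := fun k => {t | t ∈ Set.Ioo a b ∧ ∃ P : Finset ℂ,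
    ↑P ⊆ K ∩ sphere x t ∧ P.card = M ∧
    ∀ p ∈ P, ∀ q ∈ P, p ≠ q → 1 / (k + 1 : ℝ) ≤ dist p q} with hTdef
  have hmono : Monotone T := by
    intro k l hkl t ht
    obtain ⟨ht1, P, hP1, hP2, hP3⟩ := ht
    refine ⟨ht1, P, hP1, hP2, fun p hp q hq hpq => le_trans ?_ (hP3 p hp q hq hpq)⟩
    have hk : (k : ℝ) ≤ l := Nat.cast_le.mpr hkl
    apply one_div_le_one_div_of_le <;> linarith
  have hunion : Set.Ioo a b ⊆ ⋃ k, T k := by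
    intro t ht
    obtain ⟨P0, hP0sub, hP0fin, hP0card⟩ := (hinf t ht).exists_subset_ncard_eq M
    set P : Finset ℂ := hP0fin.toFinset with hPdef
    have hPsub : ↑P ⊆ K ∩ sphere x t := by simpa [hPdef] using hP0sub
    have hPcard : P.card = M := by
      rw [← hP0card, Set.ncard_eq_toFinset_card _ hP0fin]
    -- a positive separation
    have hsep : ∃ σ : ℝ, 0 < σ ∧ ∀ p ∈ P, ∀ q ∈ P, p ≠ q → σ ≤ dist p q := by
      set D := ((P ×ˢ P).filter fun pq => pq.1 ≠ pq.2).image fun pq => dist pq.1 pq.2 with hD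
      by_cases hDne : D.Nonempty
      · refine ⟨D.min' hDne, ?_, ?_⟩
        · obtain ⟨pq, hpq, hval⟩ := Finset.mem_image.mp (D.min'_mem hDne)
          rw [← hval]
          exact dist_pos.mpr (Finset.mem_filter.mp hpq).2
        · intro p hp q hq hpq
          exact D.min'_le _ (Finset.mem_image.mpr ⟨(p, q), Finset.mem_filter.mpr
            ⟨Finset.mem_product.mpr ⟨hp, hq⟩, hpq⟩, rfl⟩)
      · refine ⟨1, one_pos, fun p hp q hq hpq => absurd ?_ hDne⟩
        exact ⟨dist p q, Finset.mem_image.mpr ⟨(p, q), Finset.mem_filter.mpr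
          ⟨Finset.mem_product.mpr ⟨hp, hq⟩, hpq⟩, rfl⟩⟩
    obtain ⟨σ, hσ0, hσ⟩ := hsep
    obtain ⟨k, hk⟩ := exists_nat_one_div_lt hσ0
    exact Set.mem_iUnion.mpr ⟨k, ht, P, hPsub, hPcard,
      fun p hp q hq hpq => le_trans hk.le (hσ p hp q hq hpq)⟩
  -- find k with large measure
  have hvolIoo : volume (Set.Ioo a b) = c := by rw [hcdef, Real.volume_Ioo]
  have hlim := tendsto_measure_iUnion_atTop (μ := (volume : Measure ℝ)) hmono
  have hgelim : c / 2 < volume (⋃ k, T k) :=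
    lt_of_lt_of_le (ENNReal.half_lt_self hc0 hcT)
      (by rw [← hvolIoo]; exact measure_mono hunion)
  obtain ⟨k, hk⟩ := (hlim.eventually_const_lt hgelim).exists
  set σ : ℝ := 1 / (k + 1 : ℝ) with hσdef
  have hσ0 : 0 < σ := by positivity
  set δ : ℝ≥0∞ := ENNReal.ofReal (σ / 3) with hδdef
  have hδ0 : 0 < δ := by simp [hδdef]; linarith
  -- key lower bound for every δ-cover
  have hlower : μH[1] K + 1 ≤ μH[1] K := by
    conv_rhs => rw [Measure.hausdorffMeasure_apply]
    refine le_trans ?_ (le_iSup₂ (f := fun (r : ℝ≥0∞) (_ : 0 < r) =>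
      ⨅ (t : ℕ → Set ℂ) (_ : K ⊆ ⋃ n, t n) (_ : ∀ n, EMetric.diam (t n) ≤ r),
        ∑' n, ⨆ _ : (t n).Nonempty, EMetric.diam (t n) ^ (1:ℝ)) δ hδ0)
    refine le_iInf fun t => le_iInf fun hcov => le_iInf fun hdiam => ?_
    -- intervals of radii covered by each piece
    set I : ℕ → Set ℝ := fun n => if h : (t n ∩ K).Nonempty then
      Set.Icc (dist h.choose x - (EMetric.diam (t n)).toReal)
        (dist h.choose x + (EMetric.diam (t n)).toReal) else ∅ with hIdef
    have hImeas : ∀ n, MeasurableSet (I n) := by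
      intro n
      simp only [hIdef]
      split_ifs
      exacts [measurableSet_Icc, MeasurableSet.empty]
    have hdiamT : ∀ n, EMetric.diam (t n) ≠ ⊤ :=
      fun n => ((hdiam n).trans_lt ENNReal.ofReal_lt_top).ne
    have hvolI : ∀ n, volume (I n) ≤
        2 * ⨆ _ : (t n).Nonempty, EMetric.diam (t n) ^ (1:ℝ) := by
      intro n
      by_cases h : (t n ∩ K).Nonempty
      · have hne : (t n).Nonempty := ⟨h.choose, h.choose_spec.1⟩
        rw [hIdef]
        simp only [dif_pos h]
        rw [Real.volume_Icc, iSup_pos hne, ENNReal.rpow_one]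
        have : dist h.choose x + (EMetric.diam (t n)).toReal -
            (dist h.choose x - (EMetric.diam (t n)).toReal)
            = 2 * (EMetric.diam (t n)).toReal := by ring
        rw [this, ENNReal.ofReal_mul (by norm_num), ENNReal.ofReal_toReal (hdiamT n)]
        norm_num
      · simp [hIdef, dif_neg h]
    set g : ℝ → ℝ≥0∞ := fun s => ∑' n, (I n).indicator (fun _ => (1 : ℝ≥0∞)) s with hgdef
    have hgmeas : Measurable g :=
      Measurable.ennreal_tsum fun n => (measurable_const.indicator (hImeas n))
    set A : Set ℝ := {s | (M : ℝ≥0∞) ≤ g s} with hAdef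
    have hAmeas : MeasurableSet A := hgmeas measurableSet_Ici
    have hTA : T k ⊆ A := by
      rintro t₀ ⟨ht₀, P, hPsub, hPcard, hPsep⟩
      set ν : ℂ → ℕ := fun p => if h : ∃ n, p ∈ t n then h.choose else 0 with hνdef
      have hν : ∀ p ∈ P, p ∈ t (ν p) := by
        intro p hp
        have hex : ∃ n, p ∈ t n := Set.mem_iUnion.mp (hcov (hPsub hp).1)
        simp only [hνdef, dif_pos hex]
        exact hex.choose_spec
      have hsmall : ∀ n, ∀ p ∈ t n, ∀ q ∈ t n, dist p q ≤ σ / 3 := by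
        intro n p hp q hq
        have h1 : edist p q ≤ δ := (EMetric.edist_le_diam_of_mem hp hq).trans (hdiam n)
        rw [hδdef] at h1
        rw [dist_edist]
        calc (edist p q).toReal ≤ (ENNReal.ofReal (σ/3)).toReal :=
              ENNReal.toReal_mono ENNReal.ofReal_ne_top h1
          _ = σ / 3 := ENNReal.toReal_ofReal (by linarith)
      have hinj : Set.InjOn ν ↑P := by
        intro p hp q hq hpq
        by_contra hne
        have h1 := hPsep p hp q hq hne
        have h2 := hsmall (ν p) p (hν p hp) q (by rw [hpq]; exact hν q hq)
        rw [← hσdef] at h1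
        linarith
      have hmem : ∀ n ∈ P.image ν, t₀ ∈ I n := by
        intro n hn
        obtain ⟨p, hp, rfl⟩ := Finset.mem_image.mp hn
        have hpK : p ∈ t (ν p) ∩ K := ⟨hν p hp, (hPsub hp).1⟩
        have hnonempty : (t (ν p) ∩ K).Nonempty := ⟨p, hpK⟩
        simp only [hIdef, dif_pos hnonempty]
        set w := hnonempty.choose with hwdef
        have hw : w ∈ t (ν p) ∩ K := hnonempty.choose_spec
        have hdist : dist w p ≤ (EMetric.diam (t (ν p))).toReal := by
          rw [dist_edist]
          exact ENNReal.toReal_mono (hdiamT _) (EMetric.edist_le_diam_of_mem hw.1 (hν p hp))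
        have hpx : dist p x = t₀ := (hPsub hp).2
        have h1 : dist w x ≤ dist w p + dist p x := dist_triangle _ _ _
        have h2 : dist p x ≤ dist p w + dist w x := dist_triangle _ _ _
        rw [dist_comm p w] at h2
        constructor <;> [skip; skip] <;> rw [← hpx] <;> linarith
      have hsum : (M : ℝ≥0∞) ≤ g t₀ := by
        have hcard : (P.image ν).card = M := by
          rw [Finset.card_image_of_injOn hinj, hPcard]
        calc (M : ℝ≥0∞) = ∑ n ∈ P.image ν, 1 := by
              rw [Finset.sum_const, hcard]; simp
          _ = ∑ n ∈ P.image ν, (I n).indicator (fun _ => (1:ℝ≥0∞)) t₀ := by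
              refine Finset.sum_congr rfl fun n hn => ?_
              rw [Set.indicator_of_mem (hmem n hn)]
          _ ≤ ∑' n, (I n).indicator (fun _ => (1:ℝ≥0∞)) t₀ := ENNReal.sum_le_tsum _
      exact hsum
    have hAvol : c / 2 ≤ volume A := le_trans hk.le (measure_mono hTA)
    have hintegral : ∫⁻ s, g s = ∑' n, volume (I n) := by
      rw [hgdef]
      rw [lintegral_tsum fun n => (measurable_const.indicator (hImeas n)).aemeasurable]
      congr 1
      ext n
      exact lintegral_indicator_one (hImeas n)
    have hchain : (M : ℝ≥0∞) * (c / 2) ≤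
        2 * ∑' n, ⨆ _ : (t n).Nonempty, EMetric.diam (t n) ^ (1:ℝ) := by
      calc (M : ℝ≥0∞) * (c / 2) ≤ (M : ℝ≥0∞) * volume A := by
            exact mul_le_mul_right hAvol _
        _ = ∫⁻ _ in A, (M : ℝ≥0∞) := (setLIntegral_const A _).symm
        _ ≤ ∫⁻ s in A, g s := setLIntegral_mono hgmeas fun s hs => hs
        _ ≤ ∫⁻ s, g s := setLIntegral_le_lintegral _ _
        _ = ∑' n, volume (I n) := hintegral
        _ ≤ ∑' n, 2 * ⨆ _ : (t n).Nonempty, EMetric.diam (t n) ^ (1:ℝ) :=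
            ENNReal.tsum_le_tsum hvolI
        _ = 2 * ∑' n, ⨆ _ : (t n).Nonempty, EMetric.diam (t n) ^ (1:ℝ) :=
            ENNReal.tsum_mul_left
    have h2 : (μH[1] K + 1) * 2 ≤
        2 * ∑' n, ⨆ _ : (t n).Nonempty, EMetric.diam (t n) ^ (1:ℝ) :=
      le_trans hM'.le hchain
    rw [mul_comm] at h2
    exact (ENNReal.mul_le_mul_iff_right (by norm_num) (by norm_num)).mp h2
  have : μH[1] K < μH[1] K + 1 := ENNReal.lt_add_right hKfin one_ne_zero
  exact absurd hlower this.not_ge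

/-- Two points of `Ω` on a circle with no frontier point of `Ω` in the
angular gap between them lie in the same connected component of `U = Ω ∩ ball x R`. -/
lemma same_component_of_gap {Ω : Set ℂ} (hΩopen : IsOpen Ω) {x : ℂ} {t R : ℝ}
    (h0t : 0 < t) (htR : t < R) {z z' : ℂ}
    (hz : z ∈ Ω ∩ sphere x t) (hz' : z' ∈ Ω ∩ sphere x t)
    (hle : Complex.arg (z - x) ≤ Complex.arg (z' - x))
    (hgap : ∀ p ∈ frontier Ω ∩ sphere x t,
      Complex.arg (p - x) ∉ Set.Ioo (Complex.arg (z - x)) (Complex.arg (z' - x))) :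
    connectedComponentIn (Ω ∩ Metric.ball x R) z
      = connectedComponentIn (Ω ∩ Metric.ball x R) z' := by
  set U : Set ℂ := Ω ∩ Metric.ball x R with hUdef
  set a : ℝ := Complex.arg (z - x) with hadef
  set a' : ℝ := Complex.arg (z' - x) with ha'def
  -- parametrize points of the sphere by their argument
  have hpar : ∀ w : ℂ, w ∈ sphere x t → w = circleMap x t (Complex.arg (w - x)) := by
    intro w hw
    have habs : ‖w - x‖ = t := by
      have h1 := mem_sphere.mp hw
      rwa [Complex.dist_eq] at h1
    have := Complex.norm_mul_exp_arg_mul_I (w - x)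
    rw [habs] at this
    simp only [circleMap]
    rw [this]
    ring
  have hargeq : ∀ θ : ℝ, θ ∈ Set.Ioc (-Real.pi) Real.pi →
      Complex.arg (circleMap x t θ - x) = θ := by
    intro θ hθ
    have : circleMap x t θ - x = (t : ℂ) * Complex.exp (θ * Complex.I) := by
      simp [circleMap]
    rw [this, Complex.arg_real_mul _ h0t, Complex.exp_mul_I]
    exact Complex.arg_cos_add_sin_mul_I hθ
  -- the arc from z to z'
  set P : Set ℂ := circleMap x t '' Set.Icc a a' with hPdef
  have hPsphere : P ⊆ sphere x t := by
    rintro w ⟨θ, hθ, rfl⟩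
    exact circleMap_mem_sphere x h0t.le θ
  have hzP : z ∈ P := ⟨a, Set.left_mem_Icc.mpr hle, (hpar z hz.2).symm⟩
  have hz'P : z' ∈ P := ⟨a', Set.right_mem_Icc.mpr hle, (hpar z' hz'.2).symm⟩
  have hPconn : IsPreconnected P :=
    (isPreconnected_Icc).image _ (continuous_circleMap x t).continuousOn
  have hPfr : ∀ w ∈ P, w ∉ frontier Ω := by
    rintro w ⟨θ, hθ, rfl⟩ hwfr
    have hθIoc : θ ∈ Set.Ioc (-Real.pi) Real.pi := by
      constructor
      · exact lt_of_lt_of_le (Complex.neg_pi_lt_arg (z - x)) hθ.1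
      · exact le_trans hθ.2 (Complex.arg_le_pi (z' - x))
    have hargw : Complex.arg (circleMap x t θ - x) = θ := hargeq θ hθIoc
    have hwsphere : circleMap x t θ ∈ sphere x t := circleMap_mem_sphere x h0t.le θ
    have := hgap _ ⟨hwfr, hwsphere⟩
    rw [hargw] at this
    rcases eq_or_lt_of_le hθ.1 with heq | hlt
    · -- θ = a, so w = z ∈ Ω, contradiction with frontier
      have : circleMap x t θ = z := by rw [← heq]; exact (hpar z hz.2).symm
      rw [this] at hwfr
      exact (hΩopen.frontier_eq ▸ hwfr).2 hz.1
    · rcases eq_or_lt_of_le hθ.2 with heq2 | hlt2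
      · have : circleMap x t θ = z' := by rw [heq2]; exact (hpar z' hz'.2).symm
        rw [this] at hwfr
        exact (hΩopen.frontier_eq ▸ hwfr).2 hz'.1
      · exact this ⟨hlt, hlt2⟩
  have hPΩ : P ⊆ Ω := by
    have hsub : P ⊆ Ω ∪ (closure Ω)ᶜ := by
      intro w hw
      by_cases hcl : w ∈ closure Ω
      · left
        by_contra hnot
        exact hPfr w hw (by rw [hΩopen.frontier_eq]; exact ⟨hcl, hnot⟩)
      · right; exact hcl
    exact hPconn.subset_left_of_subset_union hΩopen (isClosed_closure.isOpen_compl)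
      (disjoint_compl_right.mono_left subset_closure) hsub ⟨z, hzP, hz.1⟩
  have hPU : P ⊆ U := by
    intro w hw
    refine ⟨hPΩ hw, ?_⟩
    have h1 := mem_sphere.mp (hPsphere hw)
    simp only [Metric.mem_ball]
    rw [h1]; exact htR
  have hsub := hPconn.subset_connectedComponentIn hzP hPU
  exact connectedComponentIn_eq (hsub hz'P)

/-- Main lemma, in the complex plane. -/
lemma main_cpx (Ω : Set ℂ) (hΩopen : IsOpen Ω) (hΩconn : IsConnected Ω)
    (hΩbdd : Bornology.IsBounded Ω) (hfin : μH[1] (frontier Ω) < ⊤)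
    (x : ℂ) (hx : x ∈ frontier Ω) (ε : ℝ) (hε : 0 < ε) :
    ∃ r > (0 : ℝ), ∃ Ω' : Set ℂ,
      IsOpen Ω' ∧ IsConnected Ω' ∧ Ω' ⊆ Ω ∧ x ∈ frontier Ω' ∧
      Metric.diam Ω' ≤ ε ∧ μH[1] (frontier Ω') ≤ ENNReal.ofReal ε ∧
      frontier Ω' ⊆ frontier Ω ∪ sphere x r := by
  classical
  have hxnotΩ : x ∉ Ω := fun h => (hΩopen.frontier_eq ▸ hx).2 h
  have hxcl : x ∈ closure Ω := frontier_subset_closure hx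
  -- Ω has positive diameter
  obtain ⟨y₀, hy₀⟩ := hΩconn.nonempty
  obtain ⟨ρ, hρ0, hρ⟩ := Metric.isOpen_iff.mp hΩopen y₀ hy₀
  have hdiampos : 0 < Metric.diam Ω := by
    have hd : dist (y₀ + ((ρ/2 : ℝ) : ℂ)) y₀ = ρ/2 := by
      simp [dist_eq_norm]
      linarith
    have h2 : y₀ + ((ρ/2 : ℝ) : ℂ) ∈ Ω := hρ (by
      simp only [Metric.mem_ball, hd]; linarith)
    have := Metric.dist_le_diam_of_mem hΩbdd h2 hy₀
    rw [hd] at this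
    linarith
  -- choose the radius R
  have hπ : (0:ℝ) < Real.pi := Real.pi_pos
  set R₀ : ℝ := min (ε / 2) (min (ε / (4 * Real.pi)) (Metric.diam Ω / 4)) with hR₀def
  have hR₀pos : 0 < R₀ := by
    apply lt_min (by linarith)
    apply lt_min (by positivity) (by linarith)
  obtain ⟨R, hR0, hRle, hRmeas⟩ := exists_small_closedBall_measure (frontier Ω)
    isClosed_frontier hfin.ne x (η := ENNReal.ofReal (ε/2))
    (by simp only [ENNReal.ofReal_pos]; linarith) hR₀pos
  have hRε2 : R ≤ ε/2 := hRle.trans (min_le_left _ _)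
  have hRπ : R ≤ ε / (4*Real.pi) := hRle.trans ((min_le_right _ _).trans (min_le_left _ _))
  have hRd : R ≤ Metric.diam Ω / 4 := hRle.trans ((min_le_right _ _).trans (min_le_right _ _))
  -- find a good circle radius t
  have hKfin : μH[1] (frontier Ω ∩ Metric.closedBall x R) ≠ ⊤ :=
    (lt_of_le_of_lt (measure_mono Set.inter_subset_left) hfin).ne
  obtain ⟨t, htIoo, htfin⟩ := exists_finite_sphere_inter _ hKfin x
    (show R/2 < R by linarith)
  have h0t : 0 < t := lt_trans (by linarith) htIoo.1
  have htR : t < R := htIoo.2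
  set U : Set ℂ := Ω ∩ Metric.ball x R with hUdef
  have hUopen : IsOpen U := hΩopen.inter Metric.isOpen_ball
  have hFfin : (frontier Ω ∩ sphere x t).Finite := by
    refine htfin.subset ?_
    rintro p ⟨hp1, hp2⟩
    have : dist p x = t := mem_sphere.mp hp2
    exact ⟨⟨hp1, by simp only [Metric.mem_closedBall]; rw [this]; linarith⟩, hp2⟩
  have hballsub : Metric.ball x t ⊆ Metric.ball x R := Metric.ball_subset_ball htR.le
  -- closures of components reach the big sphere
  have hclosU : ∀ y, closure (connectedComponentIn U y) ⊆ Metric.closedBall x R := by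
    intro y
    refine (closure_mono ((connectedComponentIn_subset U y).trans
      Set.inter_subset_right)).trans ?_
    exact closure_ball_subset_closedBall
  have hclopen : ∀ y, ∀ w ∈ closure (connectedComponentIn U y), w ∈ U →
      w ∈ connectedComponentIn U y :=
    fun y w hw hwU => mem_ccIn_of_mem_closure hUopen hwU hw
  have hspan : ∀ y ∈ U, (closure (connectedComponentIn U y) ∩ sphere x R).Nonempty := by
    intro y hy
    by_contra hemp
    rw [Set.not_nonempty_iff_eq_empty] at hemp
    have hCball : closure (connectedComponentIn U y) ⊆ Metric.ball x R := by
      intro w hw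
      have h1 : dist w x ≤ R := Metric.mem_closedBall.mp (hclosU y hw)
      have h2 : dist w x ≠ R := fun h =>
        Set.eq_empty_iff_forall_notMem.mp hemp w ⟨hw, mem_sphere.mpr h⟩
      exact Metric.mem_ball.mpr (lt_of_le_of_ne h1 h2)
    have hsub : Ω ⊆ connectedComponentIn U y ∪ (closure (connectedComponentIn U y))ᶜ := by
      intro w hwΩ
      by_cases hcl : w ∈ closure (connectedComponentIn U y)
      · exact Or.inl (hclopen y w hcl ⟨hwΩ, hCball hcl⟩)
      · exact Or.inr hcl
    have hΩC : Ω ⊆ connectedComponentIn U y :=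
      hΩconn.isPreconnected.subset_left_of_subset_union hUopen.connectedComponentIn
        isClosed_closure.isOpen_compl
        (disjoint_compl_right.mono_left subset_closure) hsub
        ⟨y, hy.1, mem_connectedComponentIn hy⟩
    have hΩball : Ω ⊆ Metric.ball x R := hΩC.trans (subset_closure.trans hCball)
    have hdle : Metric.diam Ω ≤ 2*R :=
      le_trans (Metric.diam_mono hΩball Metric.isBounded_ball) (Metric.diam_ball hR0.le)
    linarith
  -- components of points near x cross the circle of radius t
  have hcross : ∀ y ∈ Ω ∩ Metric.ball x t,
      ∃ zc, zc ∈ connectedComponentIn U y ∧ zc ∈ Ω ∩ sphere x t := by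
    intro y hy
    have hyU : y ∈ U := ⟨hy.1, hballsub hy.2⟩
    obtain ⟨q, hqcl, hqs⟩ := hspan y hyU
    obtain ⟨w, hwball, hwC⟩ := mem_closure_iff.mp hqcl (Metric.ball q (R - t))
      Metric.isOpen_ball (Metric.mem_ball_self (by linarith))
    have hwdist : t < dist w x := by
      have h1 : dist q x = R := mem_sphere.mp hqs
      have h2 : dist q w < R - t := by rw [dist_comm]; exact Metric.mem_ball.mp hwball
      have h3 := dist_triangle q w x
      linarith
    have hyd : dist y x < t := Metric.mem_ball.mp hy.2
    have hIVT := (isPreconnected_connectedComponentIn (F := U) (x := y)).intermediate_value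
      (mem_connectedComponentIn hyU) hwC
      (Continuous.continuousOn (by continuity : Continuous (fun w : ℂ => dist w x)))
    obtain ⟨zc, hzcC, hzct⟩ := hIVT ⟨hyd.le, hwdist.le⟩
    exact ⟨zc, hzcC, ⟨((connectedComponentIn_subset U y) hzcC).1, mem_sphere.mpr hzct⟩⟩
  -- the family of components
  set 𝒞 : Set (Set ℂ) := (fun y => connectedComponentIn U y) '' (Ω ∩ Metric.ball x t)
    with h𝒞def
  have hexz : ∀ C ∈ 𝒞, ∃ zc, zc ∈ Ω ∩ sphere x t ∧ C = connectedComponentIn U zc := by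
    rintro C ⟨y, hy, rfl⟩
    obtain ⟨zc, hzcC, hzc⟩ := hcross y hy
    exact ⟨zc, hzc, connectedComponentIn_eq hzcC⟩
  set G : Set ℝ := (fun p => Complex.arg (p - x)) '' (frontier Ω ∩ sphere x t) with hGdef
  have hGfin : G.Finite := hFfin.image _
  set Gs : Finset ℝ := hGfin.toFinset with hGsdef
  set φ : Set ℂ → Option ℝ := fun C =>
    if h : ∃ zc, zc ∈ Ω ∩ sphere x t ∧ C = connectedComponentIn U zc then
      (if h2 : (Gs.filter (fun β => Complex.arg (h.choose - x) ≤ β)).Nonempty then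
        some ((Gs.filter (fun β => Complex.arg (h.choose - x) ≤ β)).min' h2) else none)
    else none with hφdef
  -- injectivity of φ on 𝒞
  have hinj : Set.InjOn φ 𝒞 := by
    intro C hC C' hC' heq
    have hPC := hexz C hC
    have hPC' := hexz C' hC'
    obtain ⟨hz1, hz2⟩ := hPC.choose_spec
    obtain ⟨hz1', hz2'⟩ := hPC'.choose_spec
    set z := hPC.choose with hzdef
    set z' := hPC'.choose with hz'def
    set a : ℝ := Complex.arg (z - x) with hadef
    set a' : ℝ := Complex.arg (z' - x) with ha'def
    rw [hφdef] at heq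
    simp only [dif_pos hPC, dif_pos hPC'] at heq
    have hkey : ∀ β ∈ G, β ∉ Set.Ioo a a' ∧ β ∉ Set.Ioo a' a := by
      intro β hβ
      have hβGs : β ∈ Gs := hGfin.mem_toFinset.mpr hβ
      constructor
      · intro hββ
        have hne : (Gs.filter (fun γ => a ≤ γ)).Nonempty :=
          ⟨β, Finset.mem_filter.mpr ⟨hβGs, hββ.1.le⟩⟩
        rw [dif_pos hne] at heq
        by_cases hne' : (Gs.filter (fun γ => a' ≤ γ)).Nonempty
        · rw [dif_pos hne'] at heq
          have hmm := Option.some_injective _ heq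
          have h1 : (Gs.filter (fun γ => a ≤ γ)).min' hne ≤ β :=
            Finset.min'_le _ _ (Finset.mem_filter.mpr ⟨hβGs, hββ.1.le⟩)
          have h2 : a' ≤ (Gs.filter (fun γ => a' ≤ γ)).min' hne' :=
            (Finset.mem_filter.mp ((Gs.filter (fun γ => a' ≤ γ)).min'_mem hne')).2
          rw [← hmm] at h2
          have := hββ.2
          linarith
        · rw [dif_neg hne'] at heq
          exact Option.some_ne_none _ heq
      · intro hββ
        have hne' : (Gs.filter (fun γ => a' ≤ γ)).Nonempty :=
          ⟨β, Finset.mem_filter.mpr ⟨hβGs, hββ.1.le⟩⟩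
        rw [dif_pos hne'] at heq
        by_cases hne : (Gs.filter (fun γ => a ≤ γ)).Nonempty
        · rw [dif_pos hne] at heq
          have hmm := Option.some_injective _ heq
          have h1 : (Gs.filter (fun γ => a' ≤ γ)).min' hne' ≤ β :=
            Finset.min'_le _ _ (Finset.mem_filter.mpr ⟨hβGs, hββ.1.le⟩)
          have h2 : a ≤ (Gs.filter (fun γ => a ≤ γ)).min' hne :=
            (Finset.mem_filter.mp ((Gs.filter (fun γ => a ≤ γ)).min'_mem hne)).2
          rw [hmm] at h2
          have := hββ.2
          linarith
        · rw [dif_neg hne] at heq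
          exact Option.some_ne_none _ heq.symm
    have hccs : connectedComponentIn U z = connectedComponentIn U z' := by
      rcases le_total a a' with hle | hle
      · exact same_component_of_gap hΩopen h0t htR hz1 hz1' hle
          (fun p hp => (hkey _ ⟨p, hp, rfl⟩).1)
      · exact (same_component_of_gap hΩopen h0t htR hz1' hz1 hle
          (fun p hp => (hkey _ ⟨p, hp, rfl⟩).2)).symm
    rw [hz2, hz2', hccs]
  have h𝒞fin : 𝒞.Finite := by
    refine Set.Finite.of_finite_image ?_ hinj
    refine Set.Finite.subset (((hGfin.image some).insert none)) ?_
    rintro o ⟨C, hC, rfl⟩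
    rw [hφdef]
    by_cases h : ∃ zc, zc ∈ Ω ∩ sphere x t ∧ C = connectedComponentIn U zc
    · simp only [dif_pos h]
      by_cases h2 : (Gs.filter (fun β => Complex.arg (h.choose - x) ≤ β)).Nonempty
      · simp only [dif_pos h2]
        right
        refine ⟨_, ?_, rfl⟩
        have := ((Gs.filter (fun β => Complex.arg (h.choose - x) ≤ β)).min'_mem h2)
        have h3 := (Finset.mem_filter.mp this).1
        exact hGfin.mem_toFinset.mp h3
      · simp only [dif_neg h2]; left; rfl
    · simp only [dif_neg h]; left; rfl
  -- some component has x in its closure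
  have hcover : Ω ∩ Metric.ball x t ⊆ ⋃ C ∈ 𝒞, C := by
    intro y hy
    exact Set.mem_biUnion ⟨y, hy, rfl⟩ (mem_connectedComponentIn ⟨hy.1, hballsub hy.2⟩)
  have hxcl2 : x ∈ closure (Ω ∩ Metric.ball x t) := by
    rw [_root_.mem_closure_iff] at hxcl ⊢
    intro o ho hxo
    obtain ⟨w, hw, hwΩ⟩ := hxcl (o ∩ Metric.ball x t) (ho.inter Metric.isOpen_ball)
      ⟨hxo, Metric.mem_ball_self h0t⟩
    exact ⟨w, hw.1, hwΩ, hw.2⟩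
  have hxstar : ∃ C ∈ 𝒞, x ∈ closure C := by
    have h1 : x ∈ closure (⋃ C ∈ 𝒞, C) := closure_mono hcover hxcl2
    rw [h𝒞fin.closure_biUnion] at h1
    simpa using h1
  obtain ⟨C, hC𝒞, hxC⟩ := hxstar
  obtain ⟨y₁, hy₁, hCeq⟩ := hC𝒞
  have hy₁U : y₁ ∈ U := ⟨hy₁.1, hballsub hy₁.2⟩
  have hCopen : IsOpen C := by rw [← hCeq]; exact hUopen.connectedComponentIn
  have hCΩ : C ⊆ Ω := by
    rw [← hCeq]; exact (connectedComponentIn_subset U y₁).trans Set.inter_subset_left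
  have hCball : C ⊆ Metric.ball x R := by
    rw [← hCeq]; exact (connectedComponentIn_subset U y₁).trans Set.inter_subset_right
  -- frontier of the component
  have hCsubU : C ⊆ U := by
    rw [← hCeq]; exact connectedComponentIn_subset U y₁
  have hfrsub : frontier C ⊆ (frontier Ω ∩ Metric.closedBall x R) ∪ sphere x R := by
    intro w hw
    rw [hCopen.frontier_eq] at hw
    have hwclU : w ∈ closure U := closure_mono hCsubU hw.1
    have hwnotU : w ∉ U := by
      intro hwU
      refine hw.2 ?_
      rw [← hCeq] at hw ⊢
      exact hclopen y₁ w hw.1 hwU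
    have hwfrU : w ∈ frontier U := by rw [hUopen.frontier_eq]; exact ⟨hwclU, hwnotU⟩
    have hwcb : w ∈ Metric.closedBall x R := by
      rw [← hCeq] at hw
      exact hclosU y₁ hw.1
    have h2 := frontier_inter_subset Ω (Metric.ball x R) hwfrU
    rcases h2 with h2 | h2
    · exact Or.inl ⟨h2.1, hwcb⟩
    · right
      rw [frontier_ball x hR0.ne'] at h2
      exact h2.2
  refine ⟨R, hR0, C, hCopen, ?_, hCΩ, ?_, ?_, ?_, ?_⟩
  · -- IsConnected
    refine ⟨⟨y₁, ?_⟩, ?_⟩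
    · rw [← hCeq]; exact mem_connectedComponentIn hy₁U
    · rw [← hCeq]; exact isPreconnected_connectedComponentIn
  · -- x ∈ frontier C
    rw [hCopen.frontier_eq]
    exact ⟨hxC, fun h => hxnotΩ (hCΩ h)⟩
  · -- diam
    refine le_trans (Metric.diam_mono hCball Metric.isBounded_ball) ?_
    refine le_trans (Metric.diam_ball hR0.le) (by linarith)
  · -- measure of the frontier
    refine le_trans (measure_mono hfrsub) ?_
    refine le_trans (measure_union_le _ _) ?_
    have h1 : μH[1] (frontier Ω ∩ Metric.closedBall x R) ≤ ENNReal.ofReal (ε/2) :=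
      hRmeas.le
    have h2 : μH[1] (sphere x R) ≤ ENNReal.ofReal (ε/2) := by
      refine le_trans (hausdorffMeasure_sphere_le x hR0) ?_
      apply ENNReal.ofReal_le_ofReal
      rw [le_div_iff₀ (by positivity : (0:ℝ) < 4*Real.pi)] at hRπ
      nlinarith
    calc μH[1] (frontier Ω ∩ Metric.closedBall x R) + μH[1] (sphere x R)
        ≤ ENNReal.ofReal (ε/2) + ENNReal.ofReal (ε/2) := add_le_add h1 h2
      _ = ENNReal.ofReal ε := by
          rw [← ENNReal.ofReal_add (by linarith) (by linarith)]
          norm_num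
  · -- frontier inclusion
    refine hfrsub.trans ?_
    rintro w (hw | hw)
    · exact Or.inl hw.1
    · exact Or.inr hw

end Helpers

theorem exists_small_subdomain_at_boundary_point
    (Ω : Set (EuclideanSpace ℝ (Fin 2)))
    (hΩopen : IsOpen Ω) (hΩconn : IsConnected Ω)
    (hΩbdd : Bornology.IsBounded Ω)
    (hfin : μH[1] (frontier Ω) < ⊤)
    (x : EuclideanSpace ℝ (Fin 2)) (hx : x ∈ frontier Ω)
    (ε : ℝ) (hε : 0 < ε) :
    ∃ r > (0 : ℝ), ∃ Ω' : Set (EuclideanSpace ℝ (Fin 2)),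
      IsOpen Ω' ∧ IsConnected Ω' ∧ Ω' ⊆ Ω ∧ x ∈ frontier Ω' ∧
      Metric.diam Ω' ≤ ε ∧ μH[1] (frontier Ω') ≤ ENNReal.ofReal ε ∧
      frontier Ω' ⊆ frontier Ω ∪ sphere x r := by
  classical
  set e : ℂ ≃ₗᵢ[ℝ] EuclideanSpace ℝ (Fin 2) := Complex.orthonormalBasisOneI.repr with hedef
  set h : ℂ ≃ₜ EuclideanSpace ℝ (Fin 2) := e.toHomeomorph with hhdef
  have hcoe : ⇑h = ⇑e := rfl
  set Ω₀ : Set ℂ := ⇑e ⁻¹' Ω with hΩ₀def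
  have himg : ⇑e '' Ω₀ = Ω := by
    rw [hΩ₀def, Set.image_preimage_eq _ e.surjective]
  have hopen₀ : IsOpen Ω₀ := hΩopen.preimage e.continuous
  have hconn₀ : IsConnected Ω₀ :=
    hΩconn.preimage_of_isOpenMap e.injective h.isOpenMap
      (by rw [Set.range_eq_univ.mpr e.surjective]; exact Set.subset_univ _)
  have himg2 : Ω₀ = ⇑e.symm '' Ω := by
    ext z
    simp only [hΩ₀def, Set.mem_preimage, Set.mem_image]
    constructor
    · intro hz; exact ⟨e z, hz, e.symm_apply_apply z⟩
    · rintro ⟨w, hw, rfl⟩; rwa [e.apply_symm_apply]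
  have hbdd₀ : Bornology.IsBounded Ω₀ := by
    rw [himg2]; exact e.symm.lipschitz.isBounded_image hΩbdd
  have hfr₀ : frontier Ω₀ = ⇑e ⁻¹' (frontier Ω) := by
    rw [hΩ₀def, ← hcoe, h.preimage_frontier]
  have hfr₀' : frontier Ω₀ = ⇑e.symm '' (frontier Ω) := by
    rw [hfr₀]
    ext z
    simp only [Set.mem_preimage, Set.mem_image]
    constructor
    · intro hz; exact ⟨e z, hz, e.symm_apply_apply z⟩
    · rintro ⟨w, hw, rfl⟩; rwa [e.apply_symm_apply]
  have hfin₀ : μH[1] (frontier Ω₀) < ⊤ := by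
    rw [hfr₀', e.symm.isometry.hausdorffMeasure_image (Or.inl zero_le_one)]
    exact hfin
  set x₀ : ℂ := e.symm x with hx₀def
  have hx₀ : x₀ ∈ frontier Ω₀ := by
    rw [hfr₀, Set.mem_preimage, hx₀def, e.apply_symm_apply]
    exact hx
  obtain ⟨r, hr, Ω₀', hopen', hconn', hsub', hxfr', hdiam', hmeas', hfr'⟩ :=
    main_cpx Ω₀ hopen₀ hconn₀ hbdd₀ hfin₀ x₀ hx₀ ε hε
  refine ⟨r, hr, ⇑e '' Ω₀', ?_, ?_, ?_, ?_, ?_, ?_, ?_⟩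
  · rw [← hcoe]; exact h.isOpenMap _ hopen'
  · exact hconn'.image _ e.continuous.continuousOn
  · rw [← himg]; exact Set.image_mono hsub'
  · have : frontier (⇑e '' Ω₀') = ⇑e '' frontier Ω₀' := by
      rw [← hcoe, h.image_frontier]
    rw [this]
    refine ⟨x₀, hxfr', ?_⟩
    rw [hx₀def, e.apply_symm_apply]
  · rw [e.isometry.diam_image]; exact hdiam'
  · have : frontier (⇑e '' Ω₀') = ⇑e '' frontier Ω₀' := by
      rw [← hcoe, h.image_frontier]
    rw [this, e.isometry.hausdorffMeasure_image (Or.inl zero_le_one)]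
    exact hmeas'
  · have hfrimg : frontier (⇑e '' Ω₀') = ⇑e '' frontier Ω₀' := by
      rw [← hcoe, h.image_frontier]
    rw [hfrimg]
    have hsph : ⇑e '' sphere x₀ r = sphere x r := by
      ext w
      simp only [Set.mem_image, mem_sphere]
      constructor
      · rintro ⟨v, hv, rfl⟩
        calc dist (e v) x = dist (e v) (e x₀) := by rw [hx₀def, e.apply_symm_apply]
          _ = dist v x₀ := e.dist_map v x₀
          _ = r := hv
      · intro hw
        refine ⟨e.symm w, ?_, e.apply_symm_apply w⟩
        calc dist (e.symm w) x₀ = dist (e.symm w) (e.symm x) := by rw [hx₀def]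
          _ = dist w x := e.symm.dist_map w x
          _ = r := hw
    intro w hw
    obtain ⟨v, hv, rfl⟩ := hw
    rcases hfr' hv with h1 | h1
    · left
      have : ⇑e '' frontier Ω₀ = frontier Ω := by
        rw [← hcoe, h.image_frontier, hcoe, himg]
      rw [← this]
      exact ⟨v, h1, rfl⟩
    · right
      rw [← hsph]
      exact ⟨v, h1, rfl⟩
end
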